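/- arXiv:2602.21879 — 8 statements merged into one kernel-verified Lean document; each statement's English description precedes it below -/
import Mathlib

section
/- Let τ and σ be positive semidefinite n×n complex matrices with t := Tr τ > 0 and s := Tr σ > 0, and let O be a Hermitian n×n complex matrix. Then |Tr(O*τ)/t − Tr(O*σ)/s| ≤ (2·‖O‖ / min(t, s)) · ‖τ − σ‖₁. -/
open scoped Matrix.Norms.L2Operator ComplexOrder
open Matrix

/-- The trace norm of a complex square matrix: the trace of the positive semidefinite
square root of `Aᴴ * A` (a nonnegative real number). -/
noncomputable def traceNorm {n : Type*} [Fintype n] [DecidableEq n]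
    (A : Matrix n n ℂ) : ℝ :=
  (((Matrix.posSemidef_conjTranspose_mul_self A).1.eigenvectorUnitary : Matrix n n ℂ) *
    Matrix.diagonal (((↑) : ℝ → ℂ) ∘ (Real.sqrt ·) ∘ (Matrix.posSemidef_conjTranspose_mul_self A).1.eigenvalues) *
    (star (Matrix.posSemidef_conjTranspose_mul_self A).1.eigenvectorUnitary : Matrix n n ℂ)).trace.re

section Aux

variable {n : Type*} [Fintype n] [DecidableEq n]

/-- Diagonal entry of `star U * O * U` is bounded by `‖O‖` when `U` is unitary. -/
lemma diag_conj_bound (O U : Matrix n n ℂ) (hU : star U * U = 1) (i : n) :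
    ‖(star U * O * U) i i‖ ≤ ‖O‖ := by
  set u : n → ℂ := fun j => U j i with hu_def
  have hu : dotProduct (star u) u = 1 := by
    have := congrFun (congrFun hU i) i
    simpa [Matrix.mul_apply, dotProduct, Matrix.one_apply, mul_comm] using this
  have he : (star U * O * U) i i = dotProduct (star u) (O *ᵥ u) := by
    simp only [Matrix.mul_apply, Matrix.mulVec, dotProduct, Matrix.star_apply,
      Pi.star_apply, Finset.sum_mul, Finset.mul_sum]
    rw [Finset.sum_comm]
    apply Finset.sum_congr rfl; intro j _
    apply Finset.sum_congr rfl; intro k _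
    simp [hu_def, RCLike.star_def]
    ring
  set x : EuclideanSpace ℂ n := (WithLp.equiv 2 (n → ℂ)).symm u
  set y : EuclideanSpace ℂ n := (WithLp.equiv 2 (n → ℂ)).symm (O *ᵥ u)
  have hinner : (inner ℂ x y : ℂ) = dotProduct (star u) (O *ᵥ u) :=
    (EuclideanSpace.inner_toLp_toLp u (O *ᵥ u)).trans (dotProduct_comm _ _)
  have hx : ‖x‖ = 1 := by
    have h1 : (inner ℂ x x : ℂ) = 1 :=
      ((EuclideanSpace.inner_toLp_toLp u u).trans (dotProduct_comm _ _)).trans hu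
    have h2 : (inner ℂ x x : ℂ) = (‖x‖ : ℂ) ^ 2 := inner_self_eq_norm_sq_to_K x
    have : (‖x‖ : ℝ) ^ 2 = 1 := by
      have := h1.symm.trans h2
      exact_mod_cast this.symm
    nlinarith [norm_nonneg x]
  have hy : ‖y‖ ≤ ‖O‖ := by
    have := O.l2_opNorm_mulVec x
    rw [hx, mul_one] at this
    simpa [x, y] using this
  calc ‖(star U * O * U) i i‖ = ‖(inner ℂ x y : ℂ)‖ := by rw [he, hinner]
    _ ≤ ‖x‖ * ‖y‖ := norm_inner_le_norm x y
    _ ≤ 1 * ‖O‖ := by rw [hx]; exact mul_le_mul_of_nonneg_left hy zero_le_one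
    _ = ‖O‖ := one_mul _

lemma trace_formula (O : Matrix n n ℂ) {A : Matrix n n ℂ} (hA : A.IsHermitian) :
    (O * A).trace = ∑ i, ((star (hA.eigenvectorUnitary : Matrix n n ℂ) * O *
      (hA.eigenvectorUnitary : Matrix n n ℂ)) i i) * (hA.eigenvalues i : ℂ) := by
  set U : Matrix n n ℂ := (hA.eigenvectorUnitary : Matrix n n ℂ)
  conv_lhs => rw [hA.spectral_theorem, Unitary.conjStarAlgAut_apply]
  rw [show O * (U * diagonal (RCLike.ofReal ∘ hA.eigenvalues) * star U)
      = (O * U) * diagonal (RCLike.ofReal ∘ hA.eigenvalues) * star U by noncomm_ring,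
    Matrix.trace_mul_cycle]
  rw [show star U * (O * U) = star U * O * U by noncomm_ring]
  simp [Matrix.trace, Matrix.diag, Matrix.mul_diagonal]

lemma star_unitary_mul_self {A : Matrix n n ℂ} (hA : A.IsHermitian) :
    star (hA.eigenvectorUnitary : Matrix n n ℂ) * (hA.eigenvectorUnitary : Matrix n n ℂ) = 1 :=
  Matrix.mem_unitaryGroup_iff'.mp hA.eigenvectorUnitary.2

lemma traceNorm_hermitian {A : Matrix n n ℂ} (hA : A.IsHermitian) :
    traceNorm A = ∑ i, |hA.eigenvalues i| := by
  set U : Matrix n n ℂ := (hA.eigenvectorUnitary : Matrix n n ℂ)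
  have hB := (Matrix.posSemidef_conjTranspose_mul_self A).1
  have h1 : traceNorm A = (cfc Real.sqrt (Aᴴ * A)).trace.re := by
    rw [hB.cfc_eq, IsHermitian.cfc, Unitary.conjStarAlgAut_apply]; rfl
  have h2 : Aᴴ * A = A ^ 2 := by rw [hA.eq, pow_two]
  have h3 : cfc Real.sqrt (A ^ 2) = cfc (fun x : ℝ => |x|) A := by
    rw [← cfc_comp_pow Real.sqrt 2 A (ha := hA.isSelfAdjoint)]
    congr 1
    funext x
    exact Real.sqrt_sq_eq_abs x
  rw [h1, h2, h3, hA.cfc_eq, IsHermitian.cfc, Unitary.conjStarAlgAut_apply,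
    Matrix.trace_mul_cycle, star_unitary_mul_self hA, one_mul, Matrix.trace_diagonal,
    Complex.re_sum]
  simp

lemma trace_eq_sum_eigs {A : Matrix n n ℂ} (hA : A.IsHermitian) :
    A.trace.re = ∑ i, hA.eigenvalues i := by
  conv_lhs => rw [hA.spectral_theorem, Unitary.conjStarAlgAut_apply]
  rw [Matrix.trace_mul_cycle, star_unitary_mul_self hA, one_mul, Matrix.trace_diagonal,
    Complex.re_sum]
  simp

lemma trace_mul_bound (O : Matrix n n ℂ) {A : Matrix n n ℂ} (hA : A.IsHermitian) :
    |(O * A).trace.re| ≤ ‖O‖ * ∑ i, |hA.eigenvalues i| := by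
  rw [trace_formula O hA]
  set U : Matrix n n ℂ := (hA.eigenvectorUnitary : Matrix n n ℂ)
  have hUs : star U * U = 1 := star_unitary_mul_self hA
  calc |(∑ i, ((star U * O * U) i i) * (hA.eigenvalues i : ℂ)).re|
      ≤ ‖∑ i, ((star U * O * U) i i) * (hA.eigenvalues i : ℂ)‖ := by
        exact Complex.abs_re_le_norm _
    _ ≤ ∑ i, ‖((star U * O * U) i i) * (hA.eigenvalues i : ℂ)‖ := norm_sum_le _ _
    _ ≤ ∑ i, ‖O‖ * |hA.eigenvalues i| := by
        apply Finset.sum_le_sum; intro i _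
        rw [norm_mul, Complex.norm_real, Real.norm_eq_abs]
        exact mul_le_mul_of_nonneg_right (diag_conj_bound O U hUs i) (abs_nonneg _)
    _ = ‖O‖ * ∑ i, |hA.eigenvalues i| := by rw [Finset.mul_sum]

lemma traceNorm_psd {A : Matrix n n ℂ} (hA : A.PosSemidef) :
    traceNorm A = A.trace.re := by
  rw [traceNorm_hermitian hA.1, trace_eq_sum_eigs hA.1]
  exact Finset.sum_congr rfl fun i _ => abs_of_nonneg (hA.eigenvalues_nonneg i)

end Aux

/-- Stability bound for normalized expectation values (Lemma SM lem:normalized_stability):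
`|Tr(Oτ)/t − Tr(Oσ)/s| ≤ (2‖O‖ / min(t,s)) ‖τ − σ‖₁`. -/
theorem normalized_expectation_stability {n : Type*} [Fintype n] [DecidableEq n] [Nonempty n]
    (τ σ O : Matrix n n ℂ) (hτ : τ.PosSemidef) (hσ : σ.PosSemidef) (hO : O.IsHermitian)
    (ht : 0 < τ.trace.re) (hs : 0 < σ.trace.re) :
    |(O * τ).trace.re / τ.trace.re - (O * σ).trace.re / σ.trace.re| ≤
      (2 * ‖O‖ / min τ.trace.re σ.trace.re) * traceNorm (τ - σ) := by
  set t := τ.trace.re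
  set s := σ.trace.re
  set a := (O * τ).trace.re
  set b := (O * σ).trace.re
  set X := traceNorm (τ - σ) with hX_def
  set N := ‖O‖
  have hd : (τ - σ).IsHermitian := hτ.1.sub hσ.1
  have hN : 0 ≤ N := norm_nonneg O
  have hX0 : 0 ≤ X := by
    rw [hX_def, traceNorm_hermitian hd]
    exact Finset.sum_nonneg fun i _ => abs_nonneg _
  -- |a - b| ≤ N * X
  have h1 : |a - b| ≤ N * X := by
    have : a - b = (O * (τ - σ)).trace.re := by
      rw [Matrix.mul_sub, Matrix.trace_sub, Complex.sub_re]
    rw [this, hX_def, traceNorm_hermitian hd]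
    exact trace_mul_bound O hd
  -- |b| ≤ N * s
  have h2 : |b| ≤ N * s := by
    have := trace_mul_bound O hσ.1
    rwa [← traceNorm_hermitian hσ.1, traceNorm_psd hσ] at this
  -- |s - t| ≤ X
  have h3 : |s - t| ≤ X := by
    have htr : s - t = -(∑ i, hd.eigenvalues i) := by
      rw [← trace_eq_sum_eigs hd, Matrix.trace_sub, Complex.sub_re]; ring
    rw [htr, abs_neg, hX_def, traceNorm_hermitian hd]
    exact Finset.abs_sum_le_sum_abs _ _
  have hts : 0 < t * s := mul_pos ht hs
  -- main estimate with t in the denominator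
  have key : |a / t - b / s| ≤ 2 * N * X / t := by
    have e : a / t - b / s = (a * s - b * t) / (t * s) := by
      field_simp
    rw [e, abs_div, abs_of_pos hts]
    have hnum : |a * s - b * t| ≤ 2 * N * X * s := by
      have hab : a * s - b * t = (a - b) * s + b * (s - t) := by ring
      rw [hab]
      calc |(a - b) * s + b * (s - t)| ≤ |(a - b) * s| + |b * (s - t)| := abs_add_le _ _
        _ = |a - b| * s + |b| * |s - t| := by
            rw [abs_mul, abs_mul, abs_of_pos hs]
        _ ≤ (N * X) * s + (N * s) * X := by
            apply add_le_add
            · exact mul_le_mul_of_nonneg_right h1 hs.le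
            · exact mul_le_mul h2 h3 (abs_nonneg _) (by positivity)
        _ = 2 * N * X * s := by ring
    calc |a * s - b * t| / (t * s) ≤ (2 * N * X * s) / (t * s) := by gcongr
      _ = 2 * N * X / t := by rw [mul_div_mul_right _ _ hs.ne']
  have hmin : 0 < min t s := lt_min ht hs
  calc |a / t - b / s| ≤ 2 * N * X / t := key
    _ ≤ 2 * N * X / min t s := by
        apply div_le_div_of_nonneg_left (by positivity) hmin (min_le_left t s)
    _ = (2 * N / min t s) * X := by ring
end

section
/- Let H_Re and H_{I,1},…,H_{I,m} be Hermitian n×n complex matrices, let Δt ∈ ℝ, and let ξ₁,…,ξ_m ∈ ℝ. Set K := ∑_{ℓ=1}^{m} ξ_ℓ • H_{I,ℓ}. Then ‖exp((−i·Δt)•H_Re) * exp((−i)•K) − exp((−i)•(Δt•H_Re + K))‖ ≤ (|Δt|/2)·‖[H_Re, K]‖ ≤ (|Δt|/2)·∑_{ℓ=1}^{m} |ξ_ℓ|·‖[H_Re, H_{I,ℓ}]‖. -/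
open scoped Matrix.Norms.L2Operator
open Matrix NormedSpace

set_option maxHeartbeats 2000000
set_option synthInstance.maxHeartbeats 1000000
set_option linter.unusedSectionVars false

noncomputable instance instNormedAlgebraRatMatrixLT {n : Type*} [Fintype n] [DecidableEq n] :
    NormedAlgebra ℚ (Matrix n n ℂ) where
  norm_smul_le q A := (NormedAlgebra.restrictScalars ℚ ℂ (Matrix n n ℂ)).norm_smul_le q A

namespace LieTrotterAux

variable {n : Type*} [Fintype n] [DecidableEq n] [Nonempty n]

lemma skew_smul {A : Matrix n n ℂ} (hA : star A = -A) (t : ℝ) : star (t • A) = -(t • A) := by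
  rw [star_smul, star_trivial, hA, smul_neg]

lemma mem_unitary_exp {A : Matrix n n ℂ} (hA : star A = -A) :
    exp A ∈ unitary (Matrix n n ℂ) :=
  exp_mem_unitary_of_mem_skewAdjoint (skewAdjoint.mem_iff.mpr hA)

lemma norm_exp_skew {A : Matrix n n ℂ} (hA : star A = -A) : ‖exp A‖ = 1 :=
  CStarRing.norm_of_mem_unitary (mem_unitary_exp hA)

lemma hasDerivAt_exp_real (A : Matrix n n ℂ) (t : ℝ) :
    HasDerivAt (fun u : ℝ => exp (u • A)) (exp (t • A) * A) t := by
  simpa using hasDerivAt_exp_smul_const (𝕂 := ℝ) A t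

lemma exp_comm (A : Matrix n n ℂ) (s : ℝ) : exp (s • A) * A = A * exp (s • A) :=
  (((Commute.refl A).smul_left s).exp_left).eq

lemma exp_neg_mul (A : Matrix n n ℂ) (s : ℝ) : exp ((-s) • A) * exp (s • A) = 1 := by
  rw [← NormedSpace.exp_add_of_commute (((Commute.refl A).smul_left (-s)).smul_right s), ← add_smul,
    neg_add_cancel, zero_smul, exp_zero]

lemma cont_exp_smul (A : Matrix n n ℂ) : Continuous fun u : ℝ => exp (u • A) :=
  exp_continuous.comp (continuous_id.smul continuous_const)

lemma comm_bound {A : Matrix n n ℂ} (B : Matrix n n ℂ) (hA : star A = -A) {s : ℝ} (hs : 0 ≤ s) :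
    ‖exp (s • A) * B - B * exp (s • A)‖ ≤ s * ‖A * B - B * A‖ := by
  set C := ‖A * B - B * A‖ with hC
  set g : ℝ → Matrix n n ℂ := fun u => exp (u • A) * B * exp ((-u) • A) with hg
  have hderiv : ∀ u : ℝ,
      HasDerivAt g (exp (u • A) * (A * B - B * A) * exp ((-u) • A)) u := by
    intro u
    have h1 : HasDerivAt (fun u : ℝ => exp (u • A) * B) (exp (u • A) * A * B) u :=
      (hasDerivAt_exp_real A u).mul_const B
    have h2 : HasDerivAt (fun u : ℝ => exp ((-u) • A)) (-(exp ((-u) • A) * A)) u := by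
      have := ((hasDerivAt_exp_real A (-u)).scomp u (hasDerivAt_neg u))
      simpa [Function.comp_def, neg_one_smul, ← neg_smul] using this
    have h3 := h1.mul h2
    refine h3.congr_deriv ?_
    have hc : exp ((-u) • A) * A = A * exp ((-u) • A) := exp_comm A (-u)
    simp only [mul_neg, mul_assoc, hc, mul_sub, sub_mul, sub_eq_add_neg, add_mul,
      neg_mul, mul_add]
  have hnorm : ∀ u : ℝ, ‖exp (u • A) * (A * B - B * A) * exp ((-u) • A)‖ = C := by
    intro u
    rw [CStarRing.norm_mul_mem_unitary _ (mem_unitary_exp (skew_smul hA (-u))),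
      CStarRing.norm_mem_unitary_mul _ (mem_unitary_exp (skew_smul hA u))]
  have key : ‖g s - g 0‖ ≤ C * ‖s - 0‖ :=
    convex_univ.norm_image_sub_le_of_norm_hasDerivWithin_le
      (fun u _ => (hderiv u).hasDerivWithinAt)
      (fun u _ => le_of_eq (hnorm u)) (Set.mem_univ 0) (Set.mem_univ s)
  have hg0 : g 0 = B := by simp [hg]
  have hid : exp (s • A) * B - B * exp (s • A) = (g s - g 0) * exp (s • A) := by
    rw [hg0, sub_mul, hg]
    congr 1
    rw [mul_assoc, mul_assoc, exp_neg_mul, mul_one]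
  rw [hid, CStarRing.norm_mul_mem_unitary _ (mem_unitary_exp (skew_smul hA s))]
  calc ‖g s - g 0‖ ≤ C * ‖s - 0‖ := key
    _ = s * C := by rw [sub_zero, Real.norm_eq_abs, abs_of_nonneg hs, mul_comm]

lemma trotter {A B : Matrix n n ℂ} (hA : star A = -A) (hB : star B = -B) :
    ‖exp A * exp B - exp (A + B)‖ ≤ ‖A * B - B * A‖ / 2 := by
  set C := ‖A * B - B * A‖ with hC
  have hM : star (A + B) = -(A + B) := by rw [star_add, hA, hB, neg_add]
  set h : ℝ → Matrix n n ℂ :=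
    fun u => exp ((1 - u) • (A + B)) * (exp (u • A) * exp (u • B)) with hh
  set D : ℝ → Matrix n n ℂ := fun u =>
    exp ((1 - u) • (A + B)) *
      ((exp (u • A) * B - B * exp (u • A)) * exp (u • B)) with hD
  have hderiv : ∀ u : ℝ, HasDerivAt h (D u) u := by
    intro u
    have p1 : HasDerivAt (fun u : ℝ => exp ((1 - u) • (A + B)))
        (-(exp ((1 - u) • (A + B)) * (A + B))) u := by
      have := (hasDerivAt_exp_real (A + B) (1 - u)).scomp u
        ((hasDerivAt_id u).const_sub 1)
      simpa [Function.comp_def] using this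
    have p2 : HasDerivAt (fun u : ℝ => exp (u • A) * exp (u • B))
        (exp (u • A) * A * exp (u • B) + exp (u • A) * (exp (u • B) * B)) u :=
      (hasDerivAt_exp_real A u).mul (hasDerivAt_exp_real B u)
    have h3 := p1.mul p2
    refine h3.congr_deriv ?_
    have hcA : exp (u • A) * A = A * exp (u • A) := exp_comm A u
    have hcB : exp (u • B) * B = B * exp (u • B) := exp_comm B u
    simp only [hD, hcA, hcB, neg_mul, mul_add, add_mul, mul_sub, sub_mul, mul_assoc,
      sub_eq_add_neg, neg_add, mul_neg, mul_smul_comm]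
    abel
  have hcont : Continuous D := by
    have c1 : Continuous fun u : ℝ => exp ((1 - u) • (A + B)) :=
      exp_continuous.comp ((continuous_const.sub continuous_id).smul continuous_const)
    exact c1.mul (((cont_exp_smul A).mul continuous_const |>.sub
      (continuous_const.mul (cont_exp_smul A))).mul (cont_exp_smul B))
  have hint : IntervalIntegrable D MeasureTheory.volume 0 1 :=
    hcont.intervalIntegrable 0 1
  have heq : ∫ u in (0:ℝ)..1, D u = h 1 - h 0 :=
    intervalIntegral.integral_eq_sub_of_hasDerivAt (fun u _ => hderiv u) hint
  have hbound : ∀ᵐ t ∂(MeasureTheory.volume.restrict (Set.uIoc (0:ℝ) 1)),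
      ‖D t‖ ≤ t * C := by
    filter_upwards [MeasureTheory.ae_restrict_mem measurableSet_uIoc] with t ht
    rw [Set.uIoc_of_le (by norm_num : (0:ℝ) ≤ 1)] at ht
    have ht0 : 0 ≤ t := le_of_lt ht.1
    have : ‖D t‖ = ‖(exp (t • A) * B - B * exp (t • A)) * exp (t • B)‖ := by
      rw [hD, CStarRing.norm_mem_unitary_mul _ (mem_unitary_exp (skew_smul hM (1 - t)))]
    rw [this, CStarRing.norm_mul_mem_unitary _ (mem_unitary_exp (skew_smul hB t))]
    exact comm_bound B hA ht0
  have hgint : IntervalIntegrable (fun t : ℝ => t * C) MeasureTheory.volume 0 1 :=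
    (continuous_id.mul continuous_const).intervalIntegrable 0 1
  have hle : ‖∫ u in (0:ℝ)..1, D u‖ ≤ |∫ t in (0:ℝ)..1, t * C| :=
    (intervalIntegral.norm_integral_le_of_norm_le (by norm_num)
      ((MeasureTheory.ae_restrict_iff' measurableSet_Ioc).mp
        (by rw [← Set.uIoc_of_le (by norm_num : (0:ℝ) ≤ 1)]; exact hbound)) hgint).trans
      (le_abs_self _)
  have hval : ∫ t in (0:ℝ)..1, t * C = C / 2 := by
    rw [intervalIntegral.integral_mul_const, integral_id]
    ring
  have h1 : h 1 = exp A * exp B := by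
    simp [hh]
  have h0 : h 0 = exp (A + B) := by
    simp [hh]
  calc ‖exp A * exp B - exp (A + B)‖ = ‖∫ u in (0:ℝ)..1, D u‖ := by
        rw [heq, h1, h0]
    _ ≤ |∫ t in (0:ℝ)..1, t * C| := hle
    _ = C / 2 := by rw [hval]; exact abs_of_nonneg (by positivity)

end LieTrotterAux

/-- One-step Lie–Trotter bound for the splitting of the coherent and stochastic-noise
generators (Lemma SM lem:LT_HrHi), stated as the chain of the two inequalities. -/
theorem lie_trotter_onestep_bound {n : Type*} [Fintype n] [DecidableEq n] [Nonempty n]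
    (m : ℕ) (HRe : Matrix n n ℂ) (HI : Fin m → Matrix n n ℂ)
    (hRe : HRe.IsHermitian) (hI : ∀ ℓ, (HI ℓ).IsHermitian)
    (Δt : ℝ) (ξ : Fin m → ℝ)
    (K : Matrix n n ℂ) (hK : K = ∑ ℓ, ξ ℓ • HI ℓ) :
    ‖NormedSpace.exp (((-Complex.I) * (Δt : ℂ)) • HRe) *
        NormedSpace.exp ((-Complex.I) • K) -
        NormedSpace.exp ((-Complex.I) • (Δt • HRe + K))‖ ≤
      |Δt| / 2 * ‖HRe * K - K * HRe‖ ∧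
    |Δt| / 2 * ‖HRe * K - K * HRe‖ ≤
      |Δt| / 2 * ∑ ℓ, |ξ ℓ| * ‖HRe * HI ℓ - HI ℓ * HRe‖ := by
  have hKh : star K = K := by
    rw [hK, star_sum]
    refine Finset.sum_congr rfl fun ℓ _ => ?_
    rw [star_smul, star_trivial, Matrix.star_eq_conjTranspose, (hI ℓ).eq]
  set A : Matrix n n ℂ := ((-Complex.I) * (Δt : ℂ)) • HRe with hA'
  set B : Matrix n n ℂ := (-Complex.I) • K with hB'
  have hA : star A = -A := by
    rw [hA', star_smul, Matrix.star_eq_conjTranspose, hRe.eq, ← neg_smul]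
    congr 1
    simp [Complex.ext_iff]
  have hB : star B = -B := by
    rw [hB', star_smul, hKh, ← neg_smul]
    congr 1
    simp [Complex.ext_iff]
  have hAB : A + B = (-Complex.I) • (Δt • HRe + K) := by
    rw [smul_add, hA', hB']
    congr 1
    rw [← algebraMap_smul ℂ Δt HRe, smul_smul, Complex.coe_algebraMap]
  have hcomm : ‖A * B - B * A‖ = |Δt| * ‖HRe * K - K * HRe‖ := by
    have : A * B - B * A = ((-Δt : ℂ)) • (HRe * K - K * HRe) := by
      rw [hA', hB', smul_sub, smul_mul_assoc, smul_mul_assoc, mul_smul_comm, mul_smul_comm,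
        smul_smul, smul_smul]
      congr 1
      · congr 1
        linear_combination (Δt : ℂ) * Complex.I_sq
      · congr 1
        linear_combination (Δt : ℂ) * Complex.I_sq
    rw [this, norm_smul]
    simp
  constructor
  · have := LieTrotterAux.trotter hA hB
    rw [hAB, hcomm] at this
    calc _ ≤ |Δt| * ‖HRe * K - K * HRe‖ / 2 := this
      _ = |Δt| / 2 * ‖HRe * K - K * HRe‖ := by ring
  · apply mul_le_mul_of_nonneg_left _ (by positivity)
    calc ‖HRe * K - K * HRe‖ = ‖∑ ℓ, ξ ℓ • (HRe * HI ℓ - HI ℓ * HRe)‖ := by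
          rw [hK, Finset.mul_sum, Finset.sum_mul, ← Finset.sum_sub_distrib]
          congr 1
          ext ℓ
          simp [mul_smul_comm, smul_mul_assoc, smul_sub]
      _ ≤ ∑ ℓ, ‖ξ ℓ • (HRe * HI ℓ - HI ℓ * HRe)‖ := norm_sum_le _ _
      _ = ∑ ℓ, |ξ ℓ| * ‖HRe * HI ℓ - HI ℓ * HRe‖ := by
          simp [norm_smul, Real.norm_eq_abs]
end

section
/- Let H_Re and H_{I,1},…,H_{I,m} be Hermitian n×n complex matrices, let γ₁,…,γ_m > 0, Δt > 0, N ≥ 1, and T := N·Δt. Let μ be the product over (k,ℓ) ∈ {0,…,N−1}×{1,…,m} of the Gaussian measures gaussianReal 0 (2γ_ℓΔt), so a sample is ξ = (ξ_{k,ℓ}). For each k define U_k^{LT}(ξ) := exp((−i·Δt)•H_Re) * exp((−i)•∑_ℓ ξ_{k,ℓ}•H_{I,ℓ}) and U_k^{ex}(ξ) := exp((−i)•(Δt•H_Re + ∑_ℓ ξ_{k,ℓ}•H_{I,ℓ})). Then ∫ ‖U_{N−1}^{LT}(ξ)⋯U_0^{LT}(ξ) − U_{N−1}^{ex}(ξ)⋯U_0^{ex}(ξ)‖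 dμ(ξ) ≤ T·∑_{ℓ=1}^{m} √(γ_ℓΔt/π)·‖[H_Re, H_{I,ℓ}]‖. -/
open scoped Matrix.Norms.L2Operator NNReal
open Matrix MeasureTheory ProbabilityTheory

/-! ### Auxiliary real-integral lemmas -/

section RealInt

open Real Set

lemma aux_integral_Ioi_mul_exp {b : ℝ} (hb : 0 < b) :
    ∫ r in Set.Ioi (0 : ℝ), r * Real.exp (-b * r ^ 2) = (2 * b)⁻¹ := by
  have A : ∀ x : ℝ, HasDerivAt (fun x : ℝ => -(2 * b)⁻¹ * Real.exp (-b * x ^ 2))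
      (x * Real.exp (-b * x ^ 2)) x := by
    intro x
    refine (((hasDerivAt_pow 2 x).const_mul (-b)).exp.const_mul (-(2 * b)⁻¹)).congr_deriv ?_
    field_simp
    ring
  have B : Filter.Tendsto (fun y : ℝ => -(2 * b)⁻¹ * Real.exp (-b * y ^ 2))
      Filter.atTop (nhds (-(2 * b)⁻¹ * 0)) := by
    refine Filter.Tendsto.const_mul _ ?_
    exact Real.tendsto_exp_atBot.comp
      ((Filter.tendsto_pow_atTop two_ne_zero).const_mul_atTop_of_neg (neg_lt_zero.2 hb))
  have key : ∫ x in Set.Ioi (0:ℝ), x * Real.exp (-b * x ^ 2)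
      = (-(2 * b)⁻¹ * 0) - (-(2 * b)⁻¹ * Real.exp (-b * (0:ℝ) ^ 2)) :=
    MeasureTheory.integral_Ioi_of_hasDerivAt_of_tendsto' (fun x _ => A x)
      (integrable_mul_exp_neg_mul_sq hb).integrableOn B
  rw [key]
  norm_num

lemma aux_integral_abs_mul_exp {b : ℝ} (hb : 0 < b) :
    ∫ x : ℝ, |x| * Real.exp (-b * x ^ 2) = b⁻¹ := by
  have h : ∀ x : ℝ, |x| * Real.exp (-b * x ^ 2)
      = (fun t : ℝ => t * Real.exp (-b * t ^ 2)) |x| := by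
    intro x
    simp [sq_abs]
  calc ∫ x : ℝ, |x| * Real.exp (-b * x ^ 2)
      = ∫ x : ℝ, (fun t : ℝ => t * Real.exp (-b * t ^ 2)) |x| := by
        simp_rw [← h]
    _ = 2 * ∫ x in Set.Ioi (0 : ℝ), (fun t : ℝ => t * Real.exp (-b * t ^ 2)) x :=
        integral_comp_abs (f := fun t : ℝ => t * Real.exp (-b * t ^ 2))
    _ = 2 * ∫ x in Set.Ioi (0 : ℝ), x * Real.exp (-b * x ^ 2) := rfl
    _ = 2 * (2 * b)⁻¹ := by rw [aux_integral_Ioi_mul_exp hb]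
    _ = b⁻¹ := by
        rw [mul_inv]
        ring_nf

end RealInt

/-! ### Gaussian absolute first moment -/

section Gaussian

open Real

lemma aux_gaussian_density_abs {v : ℝ≥0} (hv : v ≠ 0) (x : ℝ) :
    gaussianPDFReal 0 v x * |x|
      = (Real.sqrt (2 * Real.pi * v))⁻¹ * (|x| * Real.exp (-(2 * (v : ℝ))⁻¹ * x ^ 2)) := by
  have hv' : (0 : ℝ) < v := lt_of_le_of_ne v.coe_nonneg (by exact_mod_cast (Ne.symm hv))
  rw [gaussianPDFReal]
  have harg : -(x - 0) ^ 2 / (2 * (v : ℝ)) = -(2 * (v : ℝ))⁻¹ * x ^ 2 := by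
    field_simp
    ring
  rw [harg]
  ring

lemma aux_integrable_abs_gaussian {v : ℝ≥0} (hv : v ≠ 0) :
    MeasureTheory.Integrable (fun x : ℝ => |x|) (gaussianReal 0 v) := by
  have hv' : (0 : ℝ) < v := lt_of_le_of_ne v.coe_nonneg (by exact_mod_cast (Ne.symm hv))
  have hb : (0 : ℝ) < (2 * (v : ℝ))⁻¹ := by positivity
  rw [gaussianReal_of_var_ne_zero 0 hv]
  have hmeas : Measurable fun x : ℝ => (gaussianPDFReal 0 v x).toNNReal :=
    (measurable_gaussianPDFReal 0 v).real_toNNReal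
  have hdens : gaussianPDF 0 v = fun x => (((gaussianPDFReal 0 v x).toNNReal : ℝ≥0) : ENNReal) := rfl
  rw [hdens]
  have heq : (fun x : ℝ => (gaussianPDFReal 0 v x).toNNReal • |x|)
      = fun x : ℝ => (Real.sqrt (2 * Real.pi * v))⁻¹ *
          (|x| * Real.exp (-(2 * (v : ℝ))⁻¹ * x ^ 2)) := by
    funext x
    rw [NNReal.smul_def, Real.coe_toNNReal _ (gaussianPDFReal_nonneg 0 v x),
      smul_eq_mul, aux_gaussian_density_abs hv]
  have hin : MeasureTheory.Integrable
      (fun x : ℝ => (gaussianPDFReal 0 v x).toNNReal • |x|) := by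
    rw [heq]
    refine MeasureTheory.Integrable.const_mul ?_ _
    simpa [abs_mul, abs_of_pos (Real.exp_pos _), sq_abs, mul_comm]
      using (integrable_mul_exp_neg_mul_sq hb).abs
  exact (integrable_withDensity_iff_integrable_smul (μ := MeasureTheory.volume)
    (g := fun x : ℝ => |x|) hmeas).mpr hin

lemma aux_integral_abs_gaussian {v : ℝ≥0} (hv : v ≠ 0) :
    ∫ x : ℝ, |x| ∂(gaussianReal 0 v) = Real.sqrt (2 * (v : ℝ) / Real.pi) := by
  have hv' : (0 : ℝ) < v := lt_of_le_of_ne v.coe_nonneg (by exact_mod_cast (Ne.symm hv))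
  have hb : (0 : ℝ) < (2 * (v : ℝ))⁻¹ := by positivity
  have hπ : (0 : ℝ) < Real.pi := Real.pi_pos
  rw [gaussianReal_of_var_ne_zero 0 hv]
  have hmeas : Measurable fun x : ℝ => (gaussianPDFReal 0 v x).toNNReal :=
    (measurable_gaussianPDFReal 0 v).real_toNNReal
  have hdens : gaussianPDF 0 v = fun x => (((gaussianPDFReal 0 v x).toNNReal : ℝ≥0) : ENNReal) := rfl
  rw [hdens, integral_withDensity_eq_integral_smul hmeas]
  have heq : (fun x : ℝ => (gaussianPDFReal 0 v x).toNNReal • |x|)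
      = fun x : ℝ => (Real.sqrt (2 * Real.pi * v))⁻¹ *
          (|x| * Real.exp (-(2 * (v : ℝ))⁻¹ * x ^ 2)) := by
    funext x
    rw [NNReal.smul_def, Real.coe_toNNReal _ (gaussianPDFReal_nonneg 0 v x),
      smul_eq_mul, aux_gaussian_density_abs hv]
  rw [heq, MeasureTheory.integral_const_mul, aux_integral_abs_mul_exp hb, inv_inv]
  have h1 : 2 * (v : ℝ) / Real.pi = (2 * (v : ℝ)) ^ 2 / (2 * Real.pi * (v : ℝ)) := by
    field_simp
  rw [h1, Real.sqrt_div (sq_nonneg _), Real.sqrt_sq (by positivity)]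
  rw [div_eq_inv_mul]

end Gaussian

/-! ### Pushforward of a product of probability measures along evaluation -/

lemma aux_pi_map_eval {ι : Type*} [Fintype ι] [DecidableEq ι] {α : ι → Type*}
    [∀ i, MeasurableSpace (α i)] (μ : ∀ i, Measure (α i))
    [∀ i, MeasureTheory.IsProbabilityMeasure (μ i)] (i : ι) :
    (Measure.pi μ).map (Function.eval i) = μ i := by
  ext s hs
  rw [Measure.map_apply (measurable_pi_apply i) hs, Set.eval_preimage, Measure.pi_pi]
  rw [Finset.prod_eq_single i (fun j _ hj => by
      rw [Function.update_of_ne hj]; exact measure_univ)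
    (fun h => absurd (Finset.mem_univ i) h)]
  rw [Function.update_self]

/-! ### Telescoping bound for products -/

section Telescope

variable {M : Type*} [NormedRing M] [NormOneClass M]

lemma aux_norm_list_prod_le_one :
    ∀ l : List M, (∀ x ∈ l, ‖x‖ ≤ 1) → ‖l.prod‖ ≤ 1
  | [], _ => by simp
  | a :: l, h => by
    rw [List.prod_cons]
    calc ‖a * l.prod‖ ≤ ‖a‖ * ‖l.prod‖ := norm_mul_le _ _
      _ ≤ 1 * 1 := by
          refine mul_le_mul (h a (by simp)) ?_ (norm_nonneg _) zero_le_one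
          exact aux_norm_list_prod_le_one l fun x hx => h x (by simp [hx])
      _ = 1 := one_mul 1

lemma aux_prod_diff :
    ∀ (N : ℕ) (f g : Fin N → M), (∀ k, ‖f k‖ ≤ 1) → (∀ k, ‖g k‖ ≤ 1) →
      ‖(List.ofFn f).reverse.prod - (List.ofFn g).reverse.prod‖ ≤ ∑ k, ‖f k - g k‖
  | 0, f, g, _, _ => by simp
  | (N + 1), f, g, hf, hg => by
    rw [List.ofFn_succ, List.ofFn_succ (f := g)]
    simp only [List.reverse_cons, List.prod_append, List.prod_cons, List.prod_nil, mul_one]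
    set P := (List.ofFn fun i : Fin N => f i.succ).reverse.prod with hP
    set Q := (List.ofFn fun i : Fin N => g i.succ).reverse.prod with hQ
    have hQ1 : ‖Q‖ ≤ 1 := by
      refine aux_norm_list_prod_le_one _ fun x hx => ?_
      rw [List.mem_reverse, List.mem_ofFn] at hx
      obtain ⟨i, rfl⟩ := hx
      exact hg _
    have hrec : ‖P - Q‖ ≤ ∑ i : Fin N, ‖f i.succ - g i.succ‖ :=
      aux_prod_diff N (fun i => f i.succ) (fun i => g i.succ)
        (fun i => hf _) (fun i => hg _)
    calc ‖P * f 0 - Q * g 0‖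
        = ‖(P - Q) * f 0 + Q * (f 0 - g 0)‖ := by
          congr 1
          noncomm_ring
      _ ≤ ‖(P - Q) * f 0‖ + ‖Q * (f 0 - g 0)‖ := norm_add_le _ _
      _ ≤ ‖P - Q‖ * ‖f 0‖ + ‖Q‖ * ‖f 0 - g 0‖ := by
          exact add_le_add (norm_mul_le _ _) (norm_mul_le _ _)
      _ ≤ (∑ i : Fin N, ‖f i.succ - g i.succ‖) * 1 + 1 * ‖f 0 - g 0‖ := by
          refine add_le_add ?_ ?_
          · exact mul_le_mul hrec (hf 0) (norm_nonneg _)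
              (Finset.sum_nonneg fun _ _ => norm_nonneg _)
          · exact mul_le_mul_of_nonneg_right hQ1 (norm_nonneg _)
      _ = ∑ k : Fin (N + 1), ‖f k - g k‖ := by
          rw [Fin.sum_univ_succ]
          ring

end Telescope

set_option maxHeartbeats 1000000
/-! ### Matrix exponential estimates -/

section MatrixAux

open NormedSpace

variable {n : Type*} [Fintype n] [DecidableEq n] [Nonempty n]

lemma aux_star_eq {M : Matrix n n ℂ} (hM : M.IsHermitian) : star M = M := hM

lemma aux_skew (c : ℂ) (hc : starRingEnd ℂ c = -c) {M : Matrix n n ℂ}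
    (hM : star M = M) : star (c • M) = -(c • M) := by
  rw [star_smul, hM, Complex.star_def, hc, neg_smul]

lemma aux_mem_unitary {A : Matrix n n ℂ} (hA : star A = -A) :
    exp A ∈ unitary (Matrix n n ℂ) :=
  by
    rw [Unitary.mem_iff, star_exp, hA, ← Matrix.exp_add_of_commute _ _ (Commute.refl A).neg_left,
      ← Matrix.exp_add_of_commute _ _ (Commute.refl A).neg_right, neg_add_cancel, add_neg_cancel,
      exp_zero, and_self_iff]

lemma aux_skew_real_smul {A : Matrix n n ℂ} (hA : star A = -A) (t : ℝ) :
    star (((t : ℂ)) • A) = -(((t : ℂ)) • A) := by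
  rw [star_smul, hA, Complex.star_def, Complex.conj_ofReal, smul_neg]

lemma aux_hasDerivAt_exp (A : Matrix n n ℂ) (t : ℝ) :
    HasDerivAt (fun s : ℝ => exp ((s : ℂ) • A)) (exp ((t : ℂ) • A) * A) t := by
  have h1 := hasDerivAt_exp_smul_const (𝕂 := ℂ) A (t : ℂ)
  have h2 : HasDerivAt (fun y : ℝ => (y : ℂ)) 1 t := by
    simpa using (hasDerivAt_id t).ofReal_comp
  simpa [Function.comp_def] using HasDerivAt.scomp t h1 h2

lemma aux_cont_exp (A : Matrix n n ℂ) :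
    Continuous (fun s : ℝ => exp ((s : ℂ) • A)) :=
  continuous_iff_continuousAt.mpr fun t => (aux_hasDerivAt_exp A t).continuousAt

lemma aux_commute_exp (A : Matrix n n ℂ) (c : ℂ) :
    A * exp (c • A) = exp (c • A) * A :=
  (((Commute.refl A).smul_right c).exp_right).eq

/-- The key commutator bound `‖[e^{sA}, B]‖ ≤ s ‖[A,B]‖` for skew-adjoint `A`. -/
lemma aux_comm_exp_bound (A B : Matrix n n ℂ) (hA : star A = -A) {s : ℝ} (hs : 0 ≤ s) :
    ‖exp ((s : ℂ) • A) * B - B * exp ((s : ℂ) • A)‖ ≤ s * ‖A * B - B * A‖ := by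
  set L : ℝ → Matrix n n ℂ :=
    fun t => exp ((t : ℂ) • (-A)) * B * exp ((t : ℂ) • A) with hL
  have hA' : star (-A) = -(-A) := by rw [star_neg, hA, neg_neg]
  have hderiv : ∀ t : ℝ, HasDerivAt L
      (exp ((t : ℂ) • (-A)) * (B * A - A * B) * exp ((t : ℂ) • A)) t := by
    intro t
    have h := (((aux_hasDerivAt_exp (-A) t).mul_const B).mul (aux_hasDerivAt_exp A t))
    refine h.congr_deriv ?_
    rw [← aux_commute_exp A (t : ℂ)]
    noncomm_ring
  have hbound : ∀ t : ℝ,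
      ‖exp ((t : ℂ) • (-A)) * (B * A - A * B) * exp ((t : ℂ) • A)‖
        ≤ ‖A * B - B * A‖ := by
    intro t
    rw [CStarRing.norm_mul_mem_unitary _ (aux_mem_unitary (aux_skew_real_smul hA t)),
      CStarRing.norm_mem_unitary_mul _ (aux_mem_unitary (aux_skew_real_smul hA' t)),
      ← norm_neg]
    apply le_of_eq
    congr 1
    noncomm_ring
  have hMVT : ‖L s - L 0‖ ≤ ‖A * B - B * A‖ * ‖s - (0 : ℝ)‖ := by
    refine Convex.norm_image_sub_le_of_norm_hasDerivWithin_le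
      (f := L) (s := Set.univ)
      (fun t _ => (hderiv t).hasDerivWithinAt) (fun t _ => hbound t) convex_univ
      (Set.mem_univ _) (Set.mem_univ _)
  have hL0 : L 0 = B := by simp [hL]
  have hprod : exp ((s : ℂ) • A) * exp ((s : ℂ) • (-A)) = 1 := by
    have hcomm : Commute (((s:ℝ):ℂ) • A) (((s:ℝ):ℂ) • (-A)) :=
      (((Commute.refl A).neg_right).smul_left _).smul_right _
    rw [← Matrix.exp_add_of_commute _ _ hcomm]
    simp
  have hkey : exp ((s : ℂ) • A) * B - B * exp ((s : ℂ) • A)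
      = exp ((s : ℂ) • A) * (L 0 - L s) := by
    rw [hL0, hL]
    calc exp ((s : ℂ) • A) * B - B * exp ((s : ℂ) • A)
        = exp ((s : ℂ) • A) * B
            - (exp ((s : ℂ) • A) * exp ((s : ℂ) • (-A))) * B * exp ((s : ℂ) • A) := by
          rw [hprod]; noncomm_ring
      _ = exp ((s : ℂ) • A) * (B - exp ((s : ℂ) • (-A)) * B * exp ((s : ℂ) • A)) := by
          noncomm_ring
  rw [hkey, CStarRing.norm_mem_unitary_mul _ (aux_mem_unitary (aux_skew_real_smul hA s)),
    ← norm_neg, neg_sub]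
  calc ‖L s - L 0‖ ≤ ‖A * B - B * A‖ * ‖s - (0 : ℝ)‖ := hMVT
    _ = s * ‖A * B - B * A‖ := by
        rw [sub_zero, Real.norm_eq_abs, abs_of_nonneg hs, mul_comm]

/-- One-step Lie–Trotter bound for skew-adjoint matrices. -/
lemma aux_trotter_one_step (A B : Matrix n n ℂ) (hA : star A = -A) (hB : star B = -B) :
    ‖exp A * exp B - exp (A + B)‖ ≤ ‖A * B - B * A‖ / 2 := by
  set C := A + B with hC
  have hCskew : star C = -C := by rw [hC, star_add, hA, hB, neg_add]
  have hC' : star (-C) = -(-C) := by rw [star_neg, hCskew, neg_neg]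
  set K : ℝ → Matrix n n ℂ :=
    fun t => exp ((t : ℂ) • (-C)) * (exp ((t : ℂ) • A) * exp ((t : ℂ) • B)) with hK
  set K' : ℝ → Matrix n n ℂ := fun t =>
    exp ((t : ℂ) • (-C)) *
      ((exp ((t : ℂ) • A) * B - B * exp ((t : ℂ) • A)) * exp ((t : ℂ) • B)) with hK'
  have hderiv : ∀ t : ℝ, HasDerivAt K (K' t) t := by
    intro t
    have h := ((aux_hasDerivAt_exp (-C) t).mul
      ((aux_hasDerivAt_exp A t).mul (aux_hasDerivAt_exp B t)))
    refine h.congr_deriv ?_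
    simp only [hK', Pi.mul_apply]
    rw [← aux_commute_exp A (t : ℂ), ← aux_commute_exp B (t : ℂ)]
    simp only [hC]
    noncomm_ring
  have hbound : ∀ t : ℝ, 0 ≤ t → ‖K' t‖ ≤ t * ‖A * B - B * A‖ := by
    intro t ht
    rw [hK']
    dsimp only
    rw [CStarRing.norm_mem_unitary_mul _ (aux_mem_unitary (aux_skew_real_smul hC' t)),
      CStarRing.norm_mul_mem_unitary _ (aux_mem_unitary (aux_skew_real_smul hB t))]
    exact aux_comm_exp_bound A B hA ht
  have hcont : Continuous K' := by
    rw [hK']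
    exact (aux_cont_exp (-C)).mul
      (((((aux_cont_exp A).mul continuous_const).sub
        (continuous_const.mul (aux_cont_exp A)))).mul (aux_cont_exp B))
  have hint : ∫ t in (0:ℝ)..1, K' t = K 1 - K 0 :=
    intervalIntegral.integral_eq_sub_of_hasDerivAt
      (fun t _ => hderiv t) (hcont.intervalIntegrable 0 1)
  have hK0 : K 0 = 1 := by simp [hK]
  have hnorm : ‖K 1 - K 0‖ ≤ ‖A * B - B * A‖ / 2 := by
    rw [← hint]
    have h1 : ‖∫ t in (0:ℝ)..1, K' t‖
        ≤ |∫ t in (0:ℝ)..1, t * ‖A * B - B * A‖| := by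
      refine intervalIntegral.norm_integral_le_abs_of_norm_le ?_ ?_
      · refine (MeasureTheory.ae_restrict_iff' measurableSet_uIoc).mpr ?_
        refine MeasureTheory.ae_of_all _ fun t ht => ?_
        have ht' : 0 < t := by
          rcases Set.mem_uIoc.mp ht with h | h
          · exact h.1
          · linarith [h.1, h.2]
        exact hbound t ht'.le
      · exact (continuous_id.mul continuous_const).intervalIntegrable 0 1
    rw [intervalIntegral.integral_mul_const, integral_id] at h1
    calc ‖∫ t in (0:ℝ)..1, K' t‖
        ≤ |(1 ^ 2 - 0 ^ 2) / 2 * ‖A * B - B * A‖| := h1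
      _ = ‖A * B - B * A‖ / 2 := by
          rw [abs_of_nonneg (by positivity)]
          ring
  have hprod : exp C * exp (-C) = 1 := by
    rw [← Matrix.exp_add_of_commute _ _ ((Commute.refl C).neg_right)]
    simp
  have hfinal : exp A * exp B - exp (A + B) = exp C * (K 1 - K 0) := by
    rw [hK0, hK]
    simp only [Complex.ofReal_one, one_smul]
    rw [mul_sub, ← mul_assoc, hprod, one_mul, mul_one, hC]
  rw [hfinal, CStarRing.norm_mem_unitary_mul _ (aux_mem_unitary hCskew)]
  exact hnorm

end MatrixAux


set_option maxHeartbeats 1000000 in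
/-- N-step ensemble-averaged Lie–Trotter accumulation bound
(Theorem SM prop:LT_scaling_Nstep). The ordered product `U_{N-1} ⋯ U_0` is
represented as `((List.ofFn U).reverse).prod`. -/
theorem lie_trotter_Nstep_expectation_bound {n : Type*} [Fintype n] [DecidableEq n] [Nonempty n]
    (m N : ℕ) (hN : 1 ≤ N)
    (HRe : Matrix n n ℂ) (HI : Fin m → Matrix n n ℂ)
    (hRe : HRe.IsHermitian) (hI : ∀ ℓ, (HI ℓ).IsHermitian)
    (γ : Fin m → ℝ) (hγ : ∀ ℓ, 0 < γ ℓ) (Δt : ℝ) (hΔt : 0 < Δt)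
    (T : ℝ) (hT : T = N * Δt)
    (μ : Measure (Fin N → Fin m → ℝ))
    (hμ : μ = Measure.pi fun _ : Fin N =>
      Measure.pi fun ℓ : Fin m => gaussianReal 0 (2 * γ ℓ * Δt).toNNReal)
    (ULT Uex : Fin N → (Fin N → Fin m → ℝ) → Matrix n n ℂ)
    (hULT : ∀ k ξ, ULT k ξ =
      NormedSpace.exp (((-Complex.I) * (Δt : ℂ)) • HRe) *
        NormedSpace.exp ((-Complex.I) • (∑ ℓ, ξ k ℓ • HI ℓ)))
    (hUex : ∀ k ξ, Uex k ξ =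
      NormedSpace.exp ((-Complex.I) • (Δt • HRe + ∑ ℓ, ξ k ℓ • HI ℓ))) :
    (∫ ξ, ‖((List.ofFn fun k => ULT k ξ).reverse).prod -
        ((List.ofFn fun k => Uex k ξ).reverse).prod‖ ∂μ) ≤
      T * ∑ ℓ, Real.sqrt (γ ℓ * Δt / Real.pi) * ‖HRe * HI ℓ - HI ℓ * HRe‖ := by
  classical
  -- Abbreviations
  set A : Matrix n n ℂ := ((-Complex.I) * (Δt : ℂ)) • HRe with hAdef
  have hcA : starRingEnd ℂ ((-Complex.I) * (Δt : ℂ)) = -((-Complex.I) * (Δt : ℂ)) := by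
    simp [Complex.ext_iff]
  have hcI : starRingEnd ℂ (-Complex.I) = -(-Complex.I) := by
    simp [Complex.ext_iff]
  have hAskew : star A = -A := aux_skew _ hcA (aux_star_eq hRe)
  have hSherm : ∀ (c : Fin m → ℝ), star (∑ ℓ, c ℓ • HI ℓ) = ∑ ℓ, c ℓ • HI ℓ := by
    intro c
    rw [star_sum]
    refine Finset.sum_congr rfl fun ℓ _ => ?_
    rw [star_smul, star_trivial, aux_star_eq (hI ℓ)]
  have hBskew : ∀ (c : Fin m → ℝ),
      star ((-Complex.I) • (∑ ℓ, c ℓ • HI ℓ)) = -((-Complex.I) • (∑ ℓ, c ℓ • HI ℓ)) :=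
    fun c => aux_skew _ hcI (hSherm c)
  -- step bound
  have hstep : ∀ (k : Fin N) (ξ : Fin N → Fin m → ℝ),
      ‖ULT k ξ - Uex k ξ‖ ≤ ∑ ℓ, (Δt / 2 * ‖HRe * HI ℓ - HI ℓ * HRe‖) * |ξ k ℓ| := by
    intro k ξ
    set B : Matrix n n ℂ := (-Complex.I) • (∑ ℓ, ξ k ℓ • HI ℓ) with hBdef
    have hsum_eq : (-Complex.I) • ((Δt • HRe) + ∑ ℓ, ξ k ℓ • HI ℓ) = A + B := by
      rw [smul_add, hAdef, hBdef, ← Complex.coe_smul, smul_smul]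
    rw [hULT, hUex, hsum_eq]
    have h1 := aux_trotter_one_step A B hAskew (hBskew (ξ k))
    refine h1.trans ?_
    -- compute the commutator
    set S : Matrix n n ℂ := ∑ ℓ, ξ k ℓ • HI ℓ with hSdef
    have hAB : A * B - B * A
        = (-(Δt : ℂ)) • (HRe * S - S * HRe) := by
      rw [hAdef, hBdef, smul_mul_smul_comm, smul_mul_smul_comm, smul_sub]
      congr 2 <;> · ring_nf; rw [Complex.I_sq]; ring
    have hcomm_sum : HRe * S - S * HRe
        = ∑ ℓ, ξ k ℓ • (HRe * HI ℓ - HI ℓ * HRe) := by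
      rw [hSdef, Finset.mul_sum, Finset.sum_mul, ← Finset.sum_sub_distrib]
      refine Finset.sum_congr rfl fun ℓ _ => ?_
      rw [mul_smul_comm, smul_mul_assoc, smul_sub]
    have hnorm1 : ‖A * B - B * A‖ ≤ Δt * ∑ ℓ, |ξ k ℓ| * ‖HRe * HI ℓ - HI ℓ * HRe‖ := by
      rw [hAB, norm_smul]
      have : ‖(-(Δt : ℂ))‖ = Δt := by
        rw [norm_neg, Complex.norm_real, Real.norm_eq_abs, abs_of_pos hΔt]
      rw [this]
      refine mul_le_mul_of_nonneg_left ?_ hΔt.le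
      rw [hcomm_sum]
      refine (norm_sum_le _ _).trans ?_
      refine le_of_eq (Finset.sum_congr rfl fun ℓ _ => ?_)
      rw [norm_smul, Real.norm_eq_abs]
    calc ‖A * B - B * A‖ / 2
        ≤ (Δt * ∑ ℓ, |ξ k ℓ| * ‖HRe * HI ℓ - HI ℓ * HRe‖) / 2 := by linarith
      _ = ∑ ℓ, (Δt / 2 * ‖HRe * HI ℓ - HI ℓ * HRe‖) * |ξ k ℓ| := by
          rw [Finset.mul_sum, Finset.sum_div]
          refine Finset.sum_congr rfl fun ℓ _ => ?_
          ring
  -- norm-one bounds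
  have hULT1 : ∀ (k : Fin N) (ξ : Fin N → Fin m → ℝ), ‖ULT k ξ‖ ≤ 1 := by
    intro k ξ
    rw [hULT]
    refine (norm_mul_le _ _).trans ?_
    rw [CStarRing.norm_of_mem_unitary (aux_mem_unitary hAskew),
      CStarRing.norm_of_mem_unitary (aux_mem_unitary (hBskew (ξ k)))]
    norm_num
  have hUex1 : ∀ (k : Fin N) (ξ : Fin N → Fin m → ℝ), ‖Uex k ξ‖ ≤ 1 := by
    intro k ξ
    rw [hUex]
    have hskew : star ((-Complex.I) • (Δt • HRe + ∑ ℓ, ξ k ℓ • HI ℓ))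
        = -((-Complex.I) • (Δt • HRe + ∑ ℓ, ξ k ℓ • HI ℓ)) := by
      refine aux_skew _ hcI ?_
      rw [star_add, star_smul, star_trivial, aux_star_eq hRe, hSherm (ξ k)]
    rw [CStarRing.norm_of_mem_unitary (aux_mem_unitary hskew)]
  -- pointwise bound
  set g : (Fin N → Fin m → ℝ) → ℝ :=
    fun ξ => ∑ k : Fin N, ∑ ℓ, (Δt / 2 * ‖HRe * HI ℓ - HI ℓ * HRe‖) * |ξ k ℓ| with hg
  have hptwise : ∀ ξ, ‖((List.ofFn fun k => ULT k ξ).reverse).prod -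
      ((List.ofFn fun k => Uex k ξ).reverse).prod‖ ≤ g ξ := by
    intro ξ
    refine (aux_prod_diff N (fun k => ULT k ξ) (fun k => Uex k ξ)
      (fun k => hULT1 k ξ) (fun k => hUex1 k ξ)).trans ?_
    exact Finset.sum_le_sum fun k _ => hstep k ξ
  -- Gaussian moments
  have hv : ∀ ℓ : Fin m, (2 * γ ℓ * Δt).toNNReal ≠ 0 := by
    intro ℓ
    simp only [ne_eq, Real.toNNReal_eq_zero, not_le]
    exact mul_pos (mul_pos two_pos (hγ ℓ)) hΔt
  have hvcoe : ∀ ℓ : Fin m, (((2 * γ ℓ * Δt).toNNReal : ℝ≥0) : ℝ) = 2 * γ ℓ * Δt := by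
    intro ℓ
    rw [Real.coe_toNNReal]
    exact (mul_pos (mul_pos two_pos (hγ ℓ)) hΔt).le
  have hmoment : ∀ ℓ : Fin m,
      ∫ x : ℝ, |x| ∂(gaussianReal 0 (2 * γ ℓ * Δt).toNNReal)
        = 2 * Real.sqrt (γ ℓ * Δt / Real.pi) := by
    intro ℓ
    rw [aux_integral_abs_gaussian (hv ℓ), hvcoe ℓ]
    rw [show 2 * (2 * γ ℓ * Δt) / Real.pi = 2 ^ 2 * (γ ℓ * Δt / Real.pi) by ring]
    rw [Real.sqrt_mul (by positivity), Real.sqrt_sq (by norm_num)]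
  -- pushforward along coordinates
  have hmap : ∀ (k : Fin N) (ℓ : Fin m),
      μ.map (fun ξ : Fin N → Fin m → ℝ => ξ k ℓ)
        = gaussianReal 0 (2 * γ ℓ * Δt).toNNReal := by
    intro k ℓ
    rw [hμ]
    have hco : (fun ξ : Fin N → Fin m → ℝ => ξ k ℓ)
        = (Function.eval ℓ : (Fin m → ℝ) → ℝ) ∘
          (Function.eval k : (Fin N → Fin m → ℝ) → (Fin m → ℝ)) := rfl
    rw [hco, ← Measure.map_map (measurable_pi_apply ℓ) (measurable_pi_apply k)]
    rw [aux_pi_map_eval, aux_pi_map_eval]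
  have hmeas_coord : ∀ (k : Fin N) (ℓ : Fin m),
      Measurable (fun ξ : Fin N → Fin m → ℝ => ξ k ℓ) :=
    fun k ℓ => (measurable_pi_apply ℓ).comp (measurable_pi_apply k)
  have hint_coord : ∀ (k : Fin N) (ℓ : Fin m),
      MeasureTheory.Integrable (fun ξ : Fin N → Fin m → ℝ => |ξ k ℓ|) μ := by
    intro k ℓ
    have h1 : MeasureTheory.Integrable (fun x : ℝ => |x|)
        (μ.map (fun ξ : Fin N → Fin m → ℝ => ξ k ℓ)) := by
      rw [hmap k ℓ]
      exact aux_integrable_abs_gaussian (hv ℓ)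
    exact (MeasureTheory.integrable_map_measure
      (by rw [hmap k ℓ]; exact continuous_abs.aestronglyMeasurable)
      (hmeas_coord k ℓ).aemeasurable).mp h1
  have hint_val : ∀ (k : Fin N) (ℓ : Fin m),
      ∫ ξ, |ξ k ℓ| ∂μ = 2 * Real.sqrt (γ ℓ * Δt / Real.pi) := by
    intro k ℓ
    have h := MeasureTheory.integral_map (hmeas_coord k ℓ).aemeasurable
      (f := fun x : ℝ => |x|)
      (by rw [hmap k ℓ]; exact continuous_abs.aestronglyMeasurable)
    rw [hmap k ℓ] at h
    rw [← h, hmoment ℓ]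
  -- integrability of g
  have hg_int : MeasureTheory.Integrable g μ := by
    rw [hg]
    refine MeasureTheory.integrable_finset_sum _ fun k _ => ?_
    refine MeasureTheory.integrable_finset_sum _ fun ℓ _ => ?_
    exact (hint_coord k ℓ).const_mul _
  -- conclude
  have hLHS : (∫ ξ, ‖((List.ofFn fun k => ULT k ξ).reverse).prod -
      ((List.ofFn fun k => Uex k ξ).reverse).prod‖ ∂μ) ≤ ∫ ξ, g ξ ∂μ := by
    refine MeasureTheory.integral_mono_of_nonneg
      (MeasureTheory.ae_of_all _ fun ξ => norm_nonneg _) hg_int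
      (MeasureTheory.ae_of_all _ hptwise)
  refine hLHS.trans (le_of_eq ?_)
  have hgval : ∫ ξ, g ξ ∂μ
      = ∑ k : Fin N, ∑ ℓ, (Δt / 2 * ‖HRe * HI ℓ - HI ℓ * HRe‖) *
          (2 * Real.sqrt (γ ℓ * Δt / Real.pi)) := by
    rw [hg, MeasureTheory.integral_finset_sum _ (fun k _ =>
      MeasureTheory.integrable_finset_sum _ fun ℓ _ => (hint_coord k ℓ).const_mul _)]
    refine Finset.sum_congr rfl fun k _ => ?_
    rw [MeasureTheory.integral_finset_sum _ (fun ℓ _ => (hint_coord k ℓ).const_mul _)]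
    refine Finset.sum_congr rfl fun ℓ _ => ?_
    rw [MeasureTheory.integral_const_mul, hint_val k ℓ]
  rw [hgval, hT]
  rw [Finset.sum_const, Finset.card_univ, Fintype.card_fin, nsmul_eq_mul, Finset.mul_sum,
    Finset.mul_sum]
  refine Finset.sum_congr rfl fun ℓ _ => ?_
  ring
end

section
/- Let A and B be Hermitian n×n complex matrices. Then the Strang (second-order Suzuki–Trotter) splitting satisfies ‖exp((−i/2)•A) * exp((−i)•B) * exp((−i/2)•A) − exp((−i)•(A + B))‖ ≤ (1/12)·‖[B, [B, A]]‖ + (1/24)·‖[A, [A, B]]‖. -/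
open scoped Matrix.Norms.L2Operator
open Matrix

set_option linter.unusedSectionVars false

namespace StrangAux

variable {n : Type*} [Fintype n] [DecidableEq n] [Nonempty n]

local notation "𝕄" => Matrix n n ℂ

noncomputable instance : NormedStarGroup 𝕄 where
  norm_star_le x := by
    rw [Matrix.star_eq_conjTranspose]; exact le_of_eq (Matrix.l2_opNorm_conjTranspose x)

noncomputable def E (X : 𝕄) (t : ℝ) : 𝕄 := NormedSpace.exp (t • X)

lemma hasDerivAt_E (X : 𝕄) (t : ℝ) : HasDerivAt (E X) (X * E X t) t := by
  have h := hasDerivAt_exp_smul_const' (𝕂 := ℝ) X t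
  exact h

lemma continuous_E (X : 𝕄) : Continuous (E X) :=
  continuous_iff_continuousAt.2 fun t => (hasDerivAt_E X t).continuousAt

lemma E_zero (X : 𝕄) : E X 0 = 1 := by
  simp [E, NormedSpace.exp_zero]

lemma E_mul_E (X : 𝕄) (a b : ℝ) : E X a * E X b = E X (a + b) := by
  rw [E, E, E, add_smul]
  let +nondep : NormedAlgebra ℚ 𝕄 := .restrictScalars ℚ ℂ 𝕄
  exact (NormedSpace.exp_add_of_commute (((Commute.refl X).smul_left a).smul_right b)).symm

lemma commute_E (X : 𝕄) (t : ℝ) : X * E X t = E X t * X :=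
  (((Commute.refl X).smul_right t).exp_right).eq

lemma E_neg_fun (X : 𝕄) (t : ℝ) : E (-X) t = E X (-t) := by
  unfold E; rw [smul_neg, ← neg_smul]

lemma norm_E (X : 𝕄) (hX : Xᴴ = -X) (t : ℝ) : ‖E X t‖ = 1 := by
  have hmem : (t • X) ∈ skewAdjoint 𝕄 := by
    rw [skewAdjoint.mem_iff]
    calc star (t • X) = t • star X := by rw [star_smul, star_trivial]
      _ = -(t • X) := by rw [Matrix.star_eq_conjTranspose, hX, smul_neg]
  let +nondep : NormedAlgebra ℚ 𝕄 := .restrictScalars ℚ ℂ 𝕄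
  exact CStarRing.norm_of_mem_unitary
    (NormedSpace.exp_mem_unitary_of_mem_skewAdjoint hmem)

lemma hasDerivAt_E_neg (X : 𝕄) (t : ℝ) :
    HasDerivAt (fun s : ℝ => E X (-s)) (-(X * E X (-t))) t := by
  have h := (hasDerivAt_E X (-t)).scomp t (hasDerivAt_neg t)
  exact h.congr_deriv (by simp)

lemma hasDerivAt_E_sub (X : 𝕄) (c t : ℝ) :
    HasDerivAt (fun s : ℝ => E X (c - s)) (-(X * E X (c - t))) t := by
  have h1 : HasDerivAt (fun s : ℝ => c - s) (-1) t := by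
    simpa using (hasDerivAt_id t).const_sub c
  have h := (hasDerivAt_E X (c - t)).scomp t h1
  exact h.congr_deriv (by simp)

lemma norm_sandwich {U V : 𝕄} (M : 𝕄) (hU : ‖U‖ ≤ 1) (hV : ‖V‖ ≤ 1) :
    ‖U * M * V‖ ≤ ‖M‖ := by
  calc ‖U * M * V‖ ≤ ‖U * M‖ * ‖V‖ := norm_mul_le _ _
    _ ≤ ‖U * M‖ * 1 := by
        exact mul_le_mul_of_nonneg_left hV (norm_nonneg _)
    _ = ‖U * M‖ := mul_one _
    _ ≤ ‖U‖ * ‖M‖ := norm_mul_le _ _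
    _ ≤ 1 * ‖M‖ := mul_le_mul_of_nonneg_right hU (norm_nonneg _)
    _ = ‖M‖ := one_mul _

lemma norm_sub_le_integral {f f' : ℝ → 𝕄} {g : ℝ → ℝ} {a b : ℝ} (hab : a ≤ b)
    (hgpos : ∀ s ∈ Set.uIcc a b, 0 ≤ g s)
    (hf : ∀ s ∈ Set.uIcc a b, HasDerivAt f (f' s) s)
    (hf' : ContinuousOn f' (Set.uIcc a b))
    (hg : ContinuousOn g (Set.uIcc a b))
    (hbd : ∀ s ∈ Set.uIcc a b, ‖f' s‖ ≤ g s) :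
    ‖f b - f a‖ ≤ ∫ s in a..b, g s := by
  have hint : IntervalIntegrable f' MeasureTheory.volume a b := hf'.intervalIntegrable
  have key := intervalIntegral.integral_eq_sub_of_hasDerivAt hf hint
  rw [← key]
  have hgi : IntervalIntegrable g MeasureTheory.volume a b := hg.intervalIntegrable
  have habs : ‖∫ y in a..b, f' y‖ ≤ |∫ s in a..b, g s| := by
    refine (intervalIntegral.norm_integral_le_of_norm_le (f := f') hab ?_ hgi).trans (le_abs_self _)
    exact Filter.Eventually.of_forall fun s hs => hbd s (Set.Icc_subset_uIcc (Set.Ioc_subset_Icc_self hs))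
  refine habs.trans (le_of_eq (abs_of_nonneg ?_))
  refine intervalIntegral.integral_nonneg hab fun u hu => hgpos u ?_
  rw [Set.uIcc_of_le hab]; exact hu

lemma norm_double {W Z : 𝕄} (h : W + W = Z) : ‖Z‖ = 2 * ‖W‖ := by
  rw [← h, ← two_smul ℝ W, norm_smul]
  simp

lemma double_comm {V X : 𝕄} (M : 𝕄) (h : V + V = X) :
    (V * M - M * V) + (V * M - M * V) = X * M - M * X := by
  rw [← h]; noncomm_ring

lemma double_comm2 {Kv K : 𝕄} (X : 𝕄) (h : Kv + Kv = K) :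
    (X * Kv - Kv * X) + (X * Kv - Kv * X) = X * K - K * X := by
  rw [← h]; noncomm_ring

lemma hasDerivAt_conj (V M : 𝕄) (s : ℝ) :
    HasDerivAt (fun r : ℝ => E V (-r) * M * E V r)
      (E V (-s) * (M * V - V * M) * E V s) s := by
  have h1 := ((hasDerivAt_E_neg V s).mul_const M).mul (hasDerivAt_E V s)
  refine h1.congr_deriv ?_
  rw [commute_E V (-s)]
  noncomm_ring

lemma continuous_conj (V M : 𝕄) :
    Continuous (fun s : ℝ => E V (-s) * M * E V s) :=
  (((continuous_E V).comp continuous_neg).mul continuous_const).mul (continuous_E V)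

lemma conj_sub_bound (V : 𝕄) (hV : ∀ r, ‖E V r‖ = 1) (M : 𝕄) {u : ℝ} (hu : 0 ≤ u) :
    ‖E V (-u) * M * E V u - M‖ ≤ u * ‖V * M - M * V‖ := by
  have h0 : E V (-(0:ℝ)) * M * E V 0 = M := by
    rw [neg_zero, E_zero]; simp
  have hb := norm_sub_le_integral (a := 0) (b := u) hu
    (f := fun r => E V (-r) * M * E V r)
    (f' := fun s => E V (-s) * (M * V - V * M) * E V s)
    (g := fun _ => ‖V * M - M * V‖)
    (fun s _ => norm_nonneg _)
    (fun s _ => hasDerivAt_conj V M s)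
    ((continuous_conj V (M * V - V * M)).continuousOn)
    (continuous_const.continuousOn)
    (fun s _ => by
      have := norm_sandwich (U := E V (-s)) (V := E V s) (M * V - V * M)
        (le_of_eq (hV (-s))) (le_of_eq (hV s))
      calc ‖E V (-s) * (M * V - V * M) * E V s‖ ≤ ‖M * V - V * M‖ := this
        _ = ‖V * M - M * V‖ := norm_sub_rev _ _)
  simp only [neg_zero, E_zero, one_mul, mul_one] at hb
  refine hb.trans (le_of_eq ?_)
  rw [intervalIntegral.integral_const]
  simp [smul_eq_mul]

lemma conj_sub_bound' (Y : 𝕄) (hY : ∀ r, ‖E Y r‖ = 1) (M : 𝕄) {u : ℝ} (hu : 0 ≤ u) :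
    ‖E Y u * M * E Y (-u) - M‖ ≤ u * ‖Y * M - M * Y‖ := by
  have hY' : ∀ r, ‖E (-Y) r‖ = 1 := fun r => by rw [E_neg_fun]; exact hY (-r)
  have h := conj_sub_bound (-Y) hY' M hu
  rw [E_neg_fun, E_neg_fun, neg_neg] at h
  have hrw : (-Y) * M - M * (-Y) = -(Y * M - M * Y) := by noncomm_ring
  rw [hrw, norm_neg] at h
  exact h

noncomputable def Wf (V Y : 𝕄) (t : ℝ) : 𝕄 := E V t * E Y t * E V t

noncomputable def Rf (V Y : 𝕄) (t : ℝ) : 𝕄 :=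
  (E V t * Y * E V (-t) - Y) * Wf V Y t + (Wf V Y t * V - V * Wf V Y t)

lemma continuous_Wf (V Y : 𝕄) : Continuous (Wf V Y) :=
  ((continuous_E V).mul (continuous_E Y)).mul (continuous_E V)

lemma continuous_Rf (V Y : 𝕄) : Continuous (Rf V Y) := by
  unfold Rf
  exact ((((((continuous_E V).mul continuous_const).mul
    ((continuous_E V).comp continuous_neg)).sub continuous_const).mul
    (continuous_Wf V Y)).add (((continuous_Wf V Y).mul continuous_const).sub
    (continuous_const.mul (continuous_Wf V Y))))

lemma Wf_hasDerivAt (V Y X : 𝕄) (hVX : V + V = X) (t : ℝ) :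
    HasDerivAt (Wf V Y) ((X + Y) * Wf V Y t + Rf V Y t) t := by
  have h := ((hasDerivAt_E V t).mul (hasDerivAt_E Y t)).mul (hasDerivAt_E V t)
  have hc : E V (-t) * E V t = 1 := by
    rw [E_mul_E]; simp [E_zero]
  rw [Pi.mul_apply] at h
  refine h.congr_deriv ?_
  unfold Rf Wf
  rw [← hVX]
  have h1 : E V t * Y * E V (-t) * (E V t * E Y t * E V t)
      = E V t * (Y * E Y t) * E V t := by
    calc E V t * Y * E V (-t) * (E V t * E Y t * E V t)
        = E V t * Y * (E V (-t) * E V t * (E Y t * E V t)) := by noncomm_ring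
      _ = E V t * (Y * E Y t) * E V t := by rw [hc]; noncomm_ring
  have h2 : (E V t * E Y t * E V t) * V = E V t * E Y t * (V * E V t) := by
    rw [commute_E V t]; noncomm_ring
  rw [sub_mul, h1, h2]
  noncomm_ring

lemma Rf_bound (V Y : 𝕄) (hnV : ∀ r, ‖E V r‖ = 1) (hnY : ∀ r, ‖E Y r‖ = 1)
    {t : ℝ} (ht : 0 ≤ t) :
    ‖Rf V Y t‖ ≤ (‖V * (V * Y - Y * V) - (V * Y - Y * V) * V‖ +
      ‖Y * (V * Y - Y * V) - (V * Y - Y * V) * Y‖) * (t ^ 2 / 2) := by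
  set Kv : 𝕄 := V * Y - Y * V with hKv
  set a : ℝ := ‖V * Kv - Kv * V‖ + ‖Y * Kv - Kv * Y‖ with ha
  have ha0 : 0 ≤ a := by positivity
  -- derivative facts for the integrand
  have hderiv : ∀ s ∈ Set.uIcc (0:ℝ) t,
      HasDerivAt (fun s => (E V s * Y * E V (-s)) * Wf V Y t -
        E V t * (E Y (t - s) * V * E Y s) * E V t)
      ((E V s * Kv * E V (-s)) * Wf V Y t -
        E V t * (E Y (t - s) * Kv * E Y s) * E V t) s := by
    intro s _
    have hp1 : HasDerivAt (fun s => (E V s * Y * E V (-s)) * Wf V Y t)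
        ((E V s * Kv * E V (-s)) * Wf V Y t) s := by
      have hi : HasDerivAt (fun s => E V s * Y * E V (-s))
          (E V s * Kv * E V (-s)) s := by
        have h := ((hasDerivAt_E V s).mul_const Y).mul (hasDerivAt_E_neg V s)
        refine h.congr_deriv ?_
        rw [hKv, commute_E V s]
        noncomm_ring
      exact hi.mul_const _
    have hp2 : HasDerivAt (fun s => E V t * (E Y (t - s) * V * E Y s) * E V t)
        (E V t * (E Y (t - s) * Kv * E Y s) * E V t) s := by
      have hi : HasDerivAt (fun s => E Y (t - s) * V * E Y s)
          (E Y (t - s) * Kv * E Y s) s := by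
        have h := (((hasDerivAt_E_sub Y t s).mul_const V).mul (hasDerivAt_E Y s))
        refine h.congr_deriv ?_
        rw [hKv, commute_E Y (t - s)]
        noncomm_ring
      exact (hi.const_mul _).mul_const _
    exact hp1.sub hp2
  have hcont : ContinuousOn (fun s => (E V s * Kv * E V (-s)) * Wf V Y t -
      E V t * (E Y (t - s) * Kv * E Y s) * E V t) (Set.uIcc (0:ℝ) t) := by
    apply Continuous.continuousOn
    refine Continuous.sub ?_ ?_
    · exact ((((continuous_E V).mul continuous_const).mul
        ((continuous_E V).comp continuous_neg)).mul continuous_const)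
    · refine (continuous_const.mul ?_).mul continuous_const
      exact (((continuous_E Y).comp (continuous_const.sub continuous_id)).mul
        continuous_const).mul (continuous_E Y)
  have hbound : ∀ s ∈ Set.uIcc (0:ℝ) t,
      ‖(E V s * Kv * E V (-s)) * Wf V Y t -
        E V t * (E Y (t - s) * Kv * E Y s) * E V t‖ ≤ a * (t - s) := by
    intro s hs
    rw [Set.uIcc_of_le ht] at hs
    obtain ⟨hs0, hst⟩ := hs
    have hu : (0:ℝ) ≤ t - s := by linarith
    have e1 : E V (-s) * E V t = E V (t - s) := by rw [E_mul_E]; congr 1; ring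
    have e2 : E V t * E V (s - t) = E V s := by rw [E_mul_E]; congr 1; ring
    have e3 : E Y (s - t) * E Y t = E Y s := by rw [E_mul_E]; congr 1; ring
    have hidP : (E V s * Kv * E V (-s)) * Wf V Y t
        = E V t * (E V (s - t) * Kv * E V (t - s)) * (E Y t * E V t) := by
      unfold Wf
      calc (E V s * Kv * E V (-s)) * (E V t * E Y t * E V t)
          = E V s * Kv * ((E V (-s) * E V t) * (E Y t * E V t)) := by noncomm_ring
        _ = E V s * Kv * (E V (t - s) * (E Y t * E V t)) := by rw [e1]
        _ = (E V s) * (Kv * E V (t - s)) * (E Y t * E V t) := by noncomm_ring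
        _ = (E V t * E V (s - t)) * (Kv * E V (t - s)) * (E Y t * E V t) := by rw [e2]
        _ = E V t * (E V (s - t) * Kv * E V (t - s)) * (E Y t * E V t) := by noncomm_ring
    have hidQ : E V t * (E Y (t - s) * Kv * E Y s) * E V t
        = E V t * (E Y (t - s) * Kv * E Y (s - t)) * (E Y t * E V t) := by
      rw [← e3]
      noncomm_ring
    rw [hidP, hidQ]
    have hsplit : E V t * (E V (s - t) * Kv * E V (t - s)) * (E Y t * E V t) -
        E V t * (E Y (t - s) * Kv * E Y (s - t)) * (E Y t * E V t)
        = E V t * ((E V (s - t) * Kv * E V (t - s)) -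
            (E Y (t - s) * Kv * E Y (s - t))) * (E Y t * E V t) := by
      noncomm_ring
    rw [hsplit]
    have hnYV : ‖E Y t * E V t‖ ≤ 1 := by
      calc ‖E Y t * E V t‖ ≤ ‖E Y t‖ * ‖E V t‖ := norm_mul_le _ _
        _ = 1 := by rw [hnY, hnV, one_mul]
    have hsand := norm_sandwich (U := E V t) (V := E Y t * E V t)
      ((E V (s - t) * Kv * E V (t - s)) - (E Y (t - s) * Kv * E Y (s - t)))
      (le_of_eq (hnV t)) hnYV
    refine hsand.trans ?_
    have hP : ‖E V (s - t) * Kv * E V (t - s) - Kv‖ ≤ (t - s) * ‖V * Kv - Kv * V‖ := by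
      have := conj_sub_bound V hnV Kv hu
      have hrw : E V (-(t - s)) = E V (s - t) := by congr 1; ring
      rwa [hrw] at this
    have hQ : ‖E Y (t - s) * Kv * E Y (s - t) - Kv‖ ≤ (t - s) * ‖Y * Kv - Kv * Y‖ := by
      have := conj_sub_bound' Y hnY Kv hu
      have hrw : E Y (-(t - s)) = E Y (s - t) := by congr 1; ring
      rwa [hrw] at this
    have hdec : (E V (s - t) * Kv * E V (t - s)) - (E Y (t - s) * Kv * E Y (s - t))
        = (E V (s - t) * Kv * E V (t - s) - Kv) -
          (E Y (t - s) * Kv * E Y (s - t) - Kv) := by abel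
    rw [hdec]
    calc ‖(E V (s - t) * Kv * E V (t - s) - Kv) -
          (E Y (t - s) * Kv * E Y (s - t) - Kv)‖
        ≤ ‖E V (s - t) * Kv * E V (t - s) - Kv‖ +
          ‖E Y (t - s) * Kv * E Y (s - t) - Kv‖ := norm_sub_le _ _
      _ ≤ (t - s) * ‖V * Kv - Kv * V‖ + (t - s) * ‖Y * Kv - Kv * Y‖ := add_le_add hP hQ
      _ = a * (t - s) := by rw [ha]; ring
  have hgpos : ∀ s ∈ Set.uIcc (0:ℝ) t, 0 ≤ a * (t - s) := by
    intro s hs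
    rw [Set.uIcc_of_le ht] at hs
    have : s ≤ t := hs.2
    have : (0:ℝ) ≤ t - s := by linarith
    positivity
  have hgcont : ContinuousOn (fun s : ℝ => a * (t - s)) (Set.uIcc (0:ℝ) t) :=
    (continuous_const.mul (continuous_const.sub continuous_id)).continuousOn
  have key := norm_sub_le_integral (a := 0) (b := t) ht hgpos hderiv hcont hgcont hbound
  -- identify f t - f 0 with Rf
  have hzero : (E V 0 * Y * E V (-0)) * Wf V Y t -
      E V t * (E Y (t - 0) * V * E Y 0) * E V t
      = Y * Wf V Y t - E V t * (E Y t * V) * E V t := by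
    rw [neg_zero, E_zero, sub_zero, E_zero]
    simp
  have hRf : Rf V Y t = ((E V t * Y * E V (-t)) * Wf V Y t -
      E V t * (E Y (t - t) * V * E Y t) * E V t) -
      ((E V 0 * Y * E V (-0)) * Wf V Y t -
      E V t * (E Y (t - 0) * V * E Y 0) * E V t) := by
    rw [hzero, sub_self, E_zero, one_mul]
    have h2a : V * Wf V Y t = E V t * (V * E Y t) * E V t := by
      unfold Wf
      calc V * (E V t * E Y t * E V t) = (V * E V t) * (E Y t * E V t) := by noncomm_ring
        _ = (E V t * V) * (E Y t * E V t) := by rw [commute_E]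
        _ = E V t * (V * E Y t) * E V t := by noncomm_ring
    have h2b : Wf V Y t * V = E V t * (E Y t * V) * E V t := by
      unfold Wf
      calc (E V t * E Y t * E V t) * V = (E V t * E Y t) * (V * E V t) := by
            rw [commute_E V t]; noncomm_ring
        _ = E V t * (E Y t * V) * E V t := by noncomm_ring
    unfold Rf
    rw [h2a, h2b]
    noncomm_ring
  rw [← hRf] at key
  refine key.trans (le_of_eq ?_)
  rw [intervalIntegral.integral_const_mul]
  have hint : ∫ s in (0:ℝ)..t, (t - s) = t ^ 2 / 2 := by
    rw [intervalIntegral.integral_sub intervalIntegrable_const (continuous_id'.intervalIntegrable _ _),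
      intervalIntegral.integral_const, integral_id]
    simp
    ring
  rw [hint]

lemma main_bound (X Y V : 𝕄) (hVX : V + V = X)
    (hXs : Xᴴ = -X) (hYs : Yᴴ = -Y) (hVs : Vᴴ = -V) :
    ‖E V 1 * E Y 1 * E V 1 - E (X + Y) 1‖ ≤
      ‖X * (X * Y - Y * X) - (X * Y - Y * X) * X‖ / 24 +
      ‖Y * (X * Y - Y * X) - (X * Y - Y * X) * Y‖ / 12 := by
  have hnV : ∀ r, ‖E V r‖ = 1 := norm_E V hVs
  have hnY : ∀ r, ‖E Y r‖ = 1 := norm_E Y hYs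
  have hZs : (X + Y)ᴴ = -(X + Y) := by
    rw [Matrix.conjTranspose_add, hXs, hYs, neg_add]
  have hnZ : ∀ r, ‖E (X + Y) r‖ = 1 := norm_E (X + Y) hZs
  set Z : 𝕄 := X + Y with hZ
  set a : ℝ := ‖V * (V * Y - Y * V) - (V * Y - Y * V) * V‖ +
      ‖Y * (V * Y - Y * V) - (V * Y - Y * V) * Y‖ with ha
  have ha0 : 0 ≤ a := by positivity
  -- Duhamel: G t = E Z (-t) * Wf V Y t
  have hG : ∀ t : ℝ, HasDerivAt (fun t => E Z (-t) * Wf V Y t)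
      (E Z (-t) * Rf V Y t) t := by
    intro t
    have h := (hasDerivAt_E_neg Z t).mul (Wf_hasDerivAt V Y X hVX t)
    rw [← hZ] at h
    refine h.congr_deriv ?_
    rw [commute_E Z (-t)]
    noncomm_ring
  have hgpos : ∀ s ∈ Set.uIcc (0:ℝ) 1, 0 ≤ a * (s ^ 2 / 2) := by
    intro s _; positivity
  have hbound : ∀ s ∈ Set.uIcc (0:ℝ) 1,
      ‖E Z (-s) * Rf V Y s‖ ≤ a * (s ^ 2 / 2) := by
    intro s hs
    rw [Set.uIcc_of_le (zero_le_one)] at hs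
    calc ‖E Z (-s) * Rf V Y s‖ ≤ ‖E Z (-s)‖ * ‖Rf V Y s‖ := norm_mul_le _ _
      _ = ‖Rf V Y s‖ := by rw [hnZ, one_mul]
      _ ≤ a * (s ^ 2 / 2) := by
          have hb := Rf_bound V Y hnV hnY hs.1
          rw [← ha] at hb
          exact hb
  have hcont : ContinuousOn (fun s : ℝ => E Z (-s) * Rf V Y s) (Set.uIcc (0:ℝ) 1) :=
    (((continuous_E Z).comp continuous_neg).mul (continuous_Rf V Y)).continuousOn
  have hgcont : ContinuousOn (fun s : ℝ => a * (s ^ 2 / 2)) (Set.uIcc (0:ℝ) 1) := by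
    apply Continuous.continuousOn; continuity
  have key := norm_sub_le_integral (a := 0) (b := 1) zero_le_one hgpos
    (fun s _ => hG s) hcont hgcont hbound
  -- identify
  have hG0 : E Z (-(0:ℝ)) * Wf V Y 0 = 1 := by
    rw [neg_zero, E_zero]
    unfold Wf
    rw [E_zero, E_zero]
    simp
  have hcancel : E Z 1 * E Z (-1) = 1 := by
    rw [E_mul_E]; simp [E_zero]
  have hsub : E V 1 * E Y 1 * E V 1 - E Z 1
      = E Z 1 * (E Z (-(1:ℝ)) * Wf V Y 1 - E Z (-(0:ℝ)) * Wf V Y 0) := by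
    rw [hG0, mul_sub, mul_one, ← mul_assoc, hcancel, one_mul]
    rfl
  have hfinal : ‖E V 1 * E Y 1 * E V 1 - E Z 1‖ ≤ ∫ s in (0:ℝ)..1, a * (s ^ 2 / 2) := by
    rw [hsub]
    calc ‖E Z 1 * (E Z (-(1:ℝ)) * Wf V Y 1 - E Z (-(0:ℝ)) * Wf V Y 0)‖
        ≤ ‖E Z 1‖ * ‖E Z (-(1:ℝ)) * Wf V Y 1 - E Z (-(0:ℝ)) * Wf V Y 0‖ := norm_mul_le _ _
      _ = ‖E Z (-(1:ℝ)) * Wf V Y 1 - E Z (-(0:ℝ)) * Wf V Y 0‖ := by rw [hnZ, one_mul]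
      _ ≤ ∫ s in (0:ℝ)..1, a * (s ^ 2 / 2) := key
  have hval : ∫ s in (0:ℝ)..1, a * (s ^ 2 / 2) = a / 6 := by
    rw [intervalIntegral.integral_const_mul]
    have : ∫ s in (0:ℝ)..1, s ^ 2 / 2 = 1 / 6 := by
      rw [intervalIntegral.integral_div, integral_pow]
      norm_num
    rw [this]; ring
  rw [hval] at hfinal
  -- convert a to double commutators in X
  set K : 𝕄 := X * Y - Y * X with hK
  set Kv : 𝕄 := V * Y - Y * V with hKv
  have hKvK : Kv + Kv = K := double_comm Y hVX
  have h1 : ‖X * K - K * X‖ = 2 * ‖X * Kv - Kv * X‖ := norm_double (double_comm2 X hKvK)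
  have h2 : ‖X * Kv - Kv * X‖ = 2 * ‖V * Kv - Kv * V‖ := norm_double (double_comm Kv hVX)
  have h3 : ‖Y * K - K * Y‖ = 2 * ‖Y * Kv - Kv * Y‖ := norm_double (double_comm2 Y hKvK)
  have haeq : a = ‖V * Kv - Kv * V‖ + ‖Y * Kv - Kv * Y‖ := rfl
  refine hfinal.trans (le_of_eq ?_)
  rw [haeq, h1, h2, h3]
  ring

end StrangAux

/-- One-step Strang (second-order Suzuki–Trotter) splitting bound
(Lemma SM lem:strang_bound_HrHi), with `[A,B] = A*B − B*A`. -/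
theorem strang_splitting_bound {n : Type*} [Fintype n] [DecidableEq n] [Nonempty n]
    (A B : Matrix n n ℂ) (hA : A.IsHermitian) (hB : B.IsHermitian) :
    ‖NormedSpace.exp ((-Complex.I / 2) • A) * NormedSpace.exp ((-Complex.I) • B) *
        NormedSpace.exp ((-Complex.I / 2) • A) -
        NormedSpace.exp ((-Complex.I) • (A + B))‖ ≤
      (1 / 12) * ‖B * (B * A - A * B) - (B * A - A * B) * B‖ +
      (1 / 24) * ‖A * (A * B - B * A) - (A * B - B * A) * A‖ := by
  classical
  set X : Matrix n n ℂ := (-Complex.I) • A with hX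
  set Y : Matrix n n ℂ := (-Complex.I) • B with hY
  set V : Matrix n n ℂ := (-Complex.I / 2) • A with hV
  have hVX : V + V = X := by
    rw [hV, hX, ← add_smul]; congr 1; ring
  have hXs : Xᴴ = -X := by
    rw [hX, Matrix.conjTranspose_smul, hA.eq, ← neg_smul]
    congr 1
    simp [Complex.ext_iff]
  have hYs : Yᴴ = -Y := by
    rw [hY, Matrix.conjTranspose_smul, hB.eq, ← neg_smul]
    congr 1
    simp [Complex.ext_iff]
  have hVs : Vᴴ = -V := by
    rw [hV, Matrix.conjTranspose_smul, hA.eq, ← neg_smul]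
    congr 1
    simp [Complex.ext_iff]
    norm_num
  have main := StrangAux.main_bound X Y V hVX hXs hYs hVs
  -- identify exponentials
  have eV : StrangAux.E V 1 = NormedSpace.exp ((-Complex.I / 2) • A) := by
    rw [StrangAux.E, one_smul, hV]
  have eY : StrangAux.E Y 1 = NormedSpace.exp ((-Complex.I) • B) := by
    rw [StrangAux.E, one_smul, hY]
  have eZ : StrangAux.E (X + Y) 1 = NormedSpace.exp ((-Complex.I) • (A + B)) := by
    rw [StrangAux.E, one_smul, hX, hY, ← smul_add]
  rw [eV, eY, eZ] at main
  -- identify commutator norms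
  have hKd : X * Y - Y * X = (-1 : ℂ) • (A * B - B * A) := by
    rw [hX, hY]
    rw [Matrix.smul_mul, Matrix.mul_smul, smul_smul, Matrix.smul_mul, Matrix.mul_smul,
      smul_smul, ← smul_sub]
    congr 1
    simp [Complex.ext_iff]
  have hK1 : X * (X * Y - Y * X) - (X * Y - Y * X) * X
      = Complex.I • (A * (A * B - B * A) - (A * B - B * A) * A) := by
    rw [hKd, hX]
    rw [Matrix.smul_mul, Matrix.mul_smul, smul_smul, Matrix.smul_mul, Matrix.mul_smul,
      smul_smul]
    norm_num
    rw [← smul_sub]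
  have hK2 : Y * (X * Y - Y * X) - (X * Y - Y * X) * Y
      = Complex.I • (B * (A * B - B * A) - (A * B - B * A) * B) := by
    rw [hKd, hY]
    rw [Matrix.smul_mul, Matrix.mul_smul, smul_smul, Matrix.smul_mul, Matrix.mul_smul,
      smul_smul]
    norm_num
    rw [← smul_sub]
  have hnormI : ∀ M : Matrix n n ℂ, ‖Complex.I • M‖ = ‖M‖ := by
    intro M
    rw [norm_smul, Complex.norm_I, one_mul]
  have hBD : B * (A * B - B * A) - (A * B - B * A) * B
      = -(B * (B * A - A * B) - (B * A - A * B) * B) := by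
    noncomm_ring
  rw [hK1, hK2, hnormI, hnormI, hBD, norm_neg] at main
  refine main.trans (le_of_eq ?_)
  ring
end

section
/- Let H_Re^{even}, H_Re^{odd} be Hermitian n×n complex matrices and set H_Re := H_Re^{even} + H_Re^{odd}. Let E_even and E_odd be disjoint finite index sets with E := E_even ∪ E_odd, let {H_{I,ℓ}}_{ℓ∈E} be Hermitian n×n complex matrices, let ξ_ℓ ∈ ℝ for ℓ ∈ E, and let Δt ≥ 0. Define K^{e} := ∑_{ℓ∈E_even} ξ_ℓ•H_{I,ℓ}, K^{o} := ∑_{ℓ∈E_odd} ξ_ℓ•H_{I,ℓ}, and K := K^{e} + K^{o}. Then ‖exp((−i·Δt)•H_Re^{even})·exp((−i·Δt)•H_Re^{odd})·exp((−i)•K^{e})·exp((−i)•K^{o}) − exp((−i)•(Δt•H_Re + K))‖ ≤ (Δt²/2)·‖[H_Re^{even},H_Re^{odd}]‖ + (1/2)·∑_{ℓ∈E_even}∑_{ℓ'∈E_odd} |ξ_ℓ|·|ξ_{ℓ'}|·‖[H_{I,ℓ},H_{I,ℓ'}]‖ + (Δt/2)·∑_{ℓ∈E} |ξ_ℓ|·‖[H_Re,H_{I,ℓ}]‖.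 -/
open scoped Matrix.Norms.L2Operator
open Matrix

set_option maxHeartbeats 1000000
set_option linter.unusedSectionVars false

open NormedSpace

section AuxLemmas

variable {n : Type*} [Fintype n] [DecidableEq n] [Nonempty n]

lemma skew_exp_mem_unitary (X : Matrix n n ℂ) (hX : Xᴴ = -X) :
    exp X ∈ unitary (Matrix n n ℂ) := by
  have hs : star (exp X) = exp (-X) := by
    rw [Matrix.star_eq_conjTranspose, ← Matrix.exp_conjTranspose, hX]
  rw [Unitary.mem_iff, hs]
  constructor
  · rw [← Matrix.exp_add_of_commute _ _ ((Commute.refl X).neg_left), neg_add_cancel, exp_zero]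
  · rw [← Matrix.exp_add_of_commute _ _ ((Commute.refl X).neg_right), add_neg_cancel, exp_zero]

lemma skew_smul (s : ℝ) (X : Matrix n n ℂ) (hX : Xᴴ = -X) : (s • X)ᴴ = -(s • X) := by
  rw [Matrix.conjTranspose_smul, hX, star_trivial, smul_neg]

lemma skew_neg (X : Matrix n n ℂ) (hX : Xᴴ = -X) : (-X)ᴴ = -(-X) := by
  rw [Matrix.conjTranspose_neg, hX, neg_neg]

lemma expR_of_skew_unitary (s : ℝ) (X : Matrix n n ℂ) (hX : Xᴴ = -X) :
    exp (s • X) ∈ unitary (Matrix n n ℂ) :=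
  skew_exp_mem_unitary _ (skew_smul s X hX)

lemma hasDerivAt_expR (A : Matrix n n ℂ) (s : ℝ) :
    HasDerivAt (fun u : ℝ => exp (u • A)) (exp (s • A) * A) s := by
  have h := hasDerivAt_exp_smul_const (𝕂 := ℝ) A s
  exact h

lemma hasDerivAt_expR' (A : Matrix n n ℂ) (s : ℝ) :
    HasDerivAt (fun u : ℝ => exp (u • A)) (A * exp (s • A)) s := by
  have h := hasDerivAt_exp_smul_const' (𝕂 := ℝ) A s
  exact h

lemma exp_commute (A : Matrix n n ℂ) (s : ℝ) : A * exp (s • A) = exp (s • A) * A :=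
  (((Commute.refl A).smul_right s).exp_right).eq

lemma exp_neg_mul (A : Matrix n n ℂ) (s : ℝ) : exp (s • (-A)) * exp (s • A) = 1 := by
  rw [← Matrix.exp_add_of_commute _ _
      (((Commute.refl A).neg_left.smul_left s).smul_right s),
    smul_neg, neg_add_cancel, exp_zero]

/-- commutator bound: `‖[e^{tA}, B]‖ ≤ t ‖[A,B]‖` for skew `A`. -/
lemma comm_exp_le (A B : Matrix n n ℂ) (hA : Aᴴ = -A) {t : ℝ} (ht : 0 ≤ t) :
    ‖exp (t • A) * B - B * exp (t • A)‖ ≤ t * ‖A * B - B * A‖ := by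
  set C := ‖A * B - B * A‖ with hC
  set g : ℝ → Matrix n n ℂ := fun s => exp (s • A) * B * exp (s • (-A)) with hg
  have hderiv : ∀ s : ℝ,
      HasDerivAt g (exp (s • A) * ((A * B - B * A) * exp (s • (-A)))) s := by
    intro s
    have h3 := ((hasDerivAt_expR' A s).mul_const B).mul (hasDerivAt_expR (-A) s)
    convert h3 using 1
    · rfl
    · rfl
    · rfl
    · rfl
    rw [show exp (s • (-A)) * (-A) = (-A) * exp (s • (-A)) from (exp_commute (-A) s).symm,
      exp_commute A s]
    noncomm_ring
  have hbound : ∀ s : ℝ,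
      ‖exp (s • A) * ((A * B - B * A) * exp (s • (-A)))‖ ≤ C := by
    intro s
    rw [CStarRing.norm_mem_unitary_mul _ (expR_of_skew_unitary s A hA),
      CStarRing.norm_mul_mem_unitary _ (expR_of_skew_unitary s (-A) (skew_neg A hA))]
  have hmv := (convex_Icc (0:ℝ) t).norm_image_sub_le_of_norm_hasDerivWithin_le
      (fun s _ => (hderiv s).hasDerivWithinAt) (fun s _ => hbound s)
      (Set.left_mem_Icc.2 ht) (Set.right_mem_Icc.2 ht)
  have hg0 : g 0 = B := by simp [hg, exp_zero]
  have key : exp (t • A) * B - B * exp (t • A) = (g t - B) * exp (t • A) := by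
    rw [hg, sub_mul, mul_assoc (exp (t • A) * B), exp_neg_mul, mul_one]
  rw [key, CStarRing.norm_mul_mem_unitary _ (expR_of_skew_unitary t A hA), ← hg0]
  calc ‖g t - g 0‖ ≤ C * ‖t - 0‖ := hmv
    _ = t * C := by rw [sub_zero, Real.norm_eq_abs, abs_of_nonneg ht, mul_comm]

/-- Trotter pair bound. -/
lemma trotter_pair (A B : Matrix n n ℂ) (hA : Aᴴ = -A) (hB : Bᴴ = -B) :
    ‖exp (A + B) - exp A * exp B‖ ≤ ‖A * B - B * A‖ / 2 := by
  set C := ‖A * B - B * A‖ with hC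
  have hAB : (A + B)ᴴ = -(A + B) := by rw [Matrix.conjTranspose_add, hA, hB, neg_add]
  have hnAB : (-(A + B))ᴴ = -(-(A + B)) := skew_neg _ hAB
  set G : ℝ → Matrix n n ℂ :=
    fun t => exp (t • (-(A + B))) * (exp (t • A) * exp (t • B)) with hGdef
  set G' : ℝ → Matrix n n ℂ := fun t =>
    exp (t • (-(A + B))) * ((exp (t • A) * B - B * exp (t • A)) * exp (t • B))
    with hG'def
  have hderiv : ∀ t : ℝ, HasDerivAt G (G' t) t := by
    intro t
    have h := (hasDerivAt_expR (-(A + B)) t).mul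
      ((hasDerivAt_expR' A t).mul (hasDerivAt_expR B t))
    convert h using 1
    · rfl
    · rfl
    · rfl
    · rfl
    rw [hG'def]
    simp only [Pi.mul_apply]
    rw [show exp (t • B) * B = B * exp (t • B) from (exp_commute B t).symm]
    noncomm_ring
  have hbound : ∀ t ∈ Set.Ioc (0:ℝ) 1, ‖G' t‖ ≤ t * C := by
    intro t ht
    rw [hG'def]
    simp only []
    rw [CStarRing.norm_mem_unitary_mul _ (expR_of_skew_unitary t _ hnAB),
      CStarRing.norm_mul_mem_unitary _ (expR_of_skew_unitary t B hB)]
    exact comm_exp_le A B hA ht.1.le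
  have hcont : Continuous G' := by
    have he : ∀ X : Matrix n n ℂ, Continuous fun t : ℝ => exp (t • X) := fun X =>
      continuous_iff_continuousAt.2 fun t => (hasDerivAt_expR X t).continuousAt
    exact (he _).mul ((((he A).mul continuous_const).sub
      (continuous_const.mul (he A))).mul (he B))
  have hFTC : ∫ t in (0:ℝ)..1, G' t = G 1 - G 0 :=
    intervalIntegral.integral_eq_sub_of_hasDerivAt (fun t _ => hderiv t)
      (hcont.intervalIntegrable 0 1)
  have hInt : ‖G 1 - G 0‖ ≤ C / 2 := by
    rw [← hFTC]
    have h := intervalIntegral.norm_integral_le_of_norm_le (μ := MeasureTheory.volume)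
      (f := G') (g := fun t => t * C) (a := 0) (b := 1)
      zero_le_one ?_ ((continuous_id.mul continuous_const).intervalIntegrable 0 1)
    · refine h.trans ?_
      rw [intervalIntegral.integral_mul_const, integral_id]
      linarith
    · refine Filter.Eventually.of_forall (fun t ht => ?_)
      exact hbound t ht
  have hG0 : G 0 = 1 := by simp [hGdef, exp_zero]
  have hG1 : exp (A + B) * G 1 = exp A * exp B := by
    rw [hGdef]
    simp only [one_smul]
    rw [← mul_assoc, ← Matrix.exp_add_of_commute _ _ ((Commute.refl (A + B)).neg_right),
      add_neg_cancel, exp_zero, one_mul]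
  have hkey : exp (A + B) - exp A * exp B = exp (A + B) * (G 0 - G 1) := by
    rw [mul_sub, hG1, hG0, mul_one]
  rw [hkey, CStarRing.norm_mem_unitary_mul _ (skew_exp_mem_unitary _ hAB), norm_sub_rev]
  exact hInt

end AuxLemmas

/-- One-step error bound for the Lie–Trotter even–odd implementation
(Proposition SM lem:onestep_combined_eo, Eq. onestep_combined_eo_bound_expanded),
with `[A,B] = A*B − B*A`. -/
theorem lie_trotter_even_odd_onestep_bound {n : Type*} [Fintype n] [DecidableEq n] [Nonempty n]
    {ι : Type*} [Fintype ι] [DecidableEq ι]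
    (HRee HReo : Matrix n n ℂ) (hRee : HRee.IsHermitian) (hReo : HReo.IsHermitian)
    (Ee Eo : Finset ι) (hdisj : Disjoint Ee Eo)
    (HI : ι → Matrix n n ℂ) (hI : ∀ ℓ ∈ Ee ∪ Eo, (HI ℓ).IsHermitian)
    (ξ : ι → ℝ) (Δt : ℝ) (hΔt : 0 ≤ Δt)
    (HRe Ke Ko K : Matrix n n ℂ)
    (hHRe : HRe = HRee + HReo)
    (hKe : Ke = ∑ ℓ ∈ Ee, ξ ℓ • HI ℓ) (hKo : Ko = ∑ ℓ ∈ Eo, ξ ℓ • HI ℓ)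
    (hK : K = Ke + Ko) :
    ‖NormedSpace.exp (((-Complex.I) * (Δt : ℂ)) • HRee) *
        NormedSpace.exp (((-Complex.I) * (Δt : ℂ)) • HReo) *
        NormedSpace.exp ((-Complex.I) • Ke) *
        NormedSpace.exp ((-Complex.I) • Ko) -
        NormedSpace.exp ((-Complex.I) • (Δt • HRe + K))‖ ≤
      Δt ^ 2 / 2 * ‖HRee * HReo - HReo * HRee‖ +
      1 / 2 * ∑ ℓ ∈ Ee, ∑ ℓ' ∈ Eo,
          |ξ ℓ| * |ξ ℓ'| * ‖HI ℓ * HI ℓ' - HI ℓ' * HI ℓ‖ +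
      Δt / 2 * ∑ ℓ ∈ Ee ∪ Eo, |ξ ℓ| * ‖HRe * HI ℓ - HI ℓ * HRe‖ := by
  set a : ℂ := (-Complex.I) * (Δt : ℂ) with ha
  have hstara : star a = -a := by
    rw [ha]
    simp [Complex.ext_iff]
  have hstarI : star (-Complex.I) = -(-Complex.I) := by simp
  have hskew : ∀ (c : ℂ), star c = -c → ∀ (H : Matrix n n ℂ), H.IsHermitian →
      (c • H)ᴴ = -(c • H) := by
    intro c hc H hH
    rw [Matrix.conjTranspose_smul, hH.eq, hc, neg_smul]
  have hKeH : Ke.IsHermitian := by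
    show Keᴴ = Ke
    rw [hKe, Matrix.conjTranspose_sum]
    refine Finset.sum_congr rfl fun ℓ hℓ => ?_
    rw [Matrix.conjTranspose_smul, star_trivial, (hI ℓ (Finset.mem_union_left _ hℓ)).eq]
  have hKoH : Ko.IsHermitian := by
    show Koᴴ = Ko
    rw [hKo, Matrix.conjTranspose_sum]
    refine Finset.sum_congr rfl fun ℓ hℓ => ?_
    rw [Matrix.conjTranspose_smul, star_trivial, (hI ℓ (Finset.mem_union_right _ hℓ)).eq]
  set X := a • HRee with hXdef
  set Y := a • HReo with hYdef
  set Cm := (-Complex.I) • Ke with hCmdef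
  set Dm := (-Complex.I) • Ko with hDmdef
  have hX : Xᴴ = -X := hskew a hstara HRee hRee
  have hY : Yᴴ = -Y := hskew a hstara HReo hReo
  have hCm : Cmᴴ = -Cm := hskew _ hstarI Ke hKeH
  have hDm : Dmᴴ = -Dm := hskew _ hstarI Ko hKoH
  have hXY : (X + Y)ᴴ = -(X + Y) := by rw [Matrix.conjTranspose_add, hX, hY, neg_add]
  have hCD : (Cm + Dm)ᴴ = -(Cm + Dm) := by rw [Matrix.conjTranspose_add, hCm, hDm, neg_add]
  have hreal : ∀ (M : Matrix n n ℂ), Δt • M = ((Δt : ℂ)) • M := fun M => by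
    rw [← smul_one_smul ℂ Δt M, Complex.real_smul, mul_one]
  have hS : (-Complex.I) • (Δt • HRe + K) = (X + Y) + (Cm + Dm) := by
    rw [hHRe, hK]
    simp only [smul_add, hreal, smul_smul, ← ha]
    rfl
  rw [hS]
  -- unitarity
  have huXY : exp (X + Y) ∈ unitary (Matrix n n ℂ) := skew_exp_mem_unitary _ hXY
  have hu3 : exp Cm ∈ unitary (Matrix n n ℂ) := skew_exp_mem_unitary _ hCm
  have hu4 : exp Dm ∈ unitary (Matrix n n ℂ) := skew_exp_mem_unitary _ hDm
  have hu34 : exp Cm * exp Dm ∈ unitary (Matrix n n ℂ) := mul_mem hu3 hu4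
  -- three trotter bounds
  have t1 : ‖exp X * exp Y * exp Cm * exp Dm -
      exp (X + Y) * (exp Cm * exp Dm)‖ ≤ ‖X * Y - Y * X‖ / 2 := by
    rw [show exp X * exp Y * exp Cm * exp Dm -
        exp (X + Y) * (exp Cm * exp Dm) =
        (exp X * exp Y - exp (X + Y)) * (exp Cm * exp Dm) from by noncomm_ring,
      CStarRing.norm_mul_mem_unitary _ hu34, norm_sub_rev]
    exact trotter_pair X Y hX hY
  have t2 : ‖exp (X + Y) * (exp Cm * exp Dm) - exp (X + Y) * exp (Cm + Dm)‖ ≤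
      ‖Cm * Dm - Dm * Cm‖ / 2 := by
    rw [← mul_sub, CStarRing.norm_mem_unitary_mul _ huXY, norm_sub_rev]
    exact trotter_pair Cm Dm hCm hDm
  have t3 : ‖exp (X + Y) * exp (Cm + Dm) - exp ((X + Y) + (Cm + Dm))‖ ≤
      ‖(X + Y) * (Cm + Dm) - (Cm + Dm) * (X + Y)‖ / 2 := by
    rw [norm_sub_rev]
    exact trotter_pair _ _ hXY hCD
  have tri : ‖exp X * exp Y * exp Cm * exp Dm - exp ((X + Y) + (Cm + Dm))‖ ≤
      ‖X * Y - Y * X‖ / 2 + ‖Cm * Dm - Dm * Cm‖ / 2 +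
        ‖(X + Y) * (Cm + Dm) - (Cm + Dm) * (X + Y)‖ / 2 := by
    calc ‖exp X * exp Y * exp Cm * exp Dm - exp ((X + Y) + (Cm + Dm))‖
        = ‖(exp X * exp Y * exp Cm * exp Dm -
              exp (X + Y) * (exp Cm * exp Dm)) +
            ((exp (X + Y) * (exp Cm * exp Dm) - exp (X + Y) * exp (Cm + Dm)) +
            (exp (X + Y) * exp (Cm + Dm) - exp ((X + Y) + (Cm + Dm))))‖ := by
          congr 1; abel
      _ ≤ _ := by
          refine (norm_add_le _ _).trans ?_
          have := (norm_add_le (exp (X + Y) * (exp Cm * exp Dm) -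
            exp (X + Y) * exp (Cm + Dm)) (exp (X + Y) * exp (Cm + Dm) -
            exp ((X + Y) + (Cm + Dm))))
          linarith
  -- scalar norms
  have hna : ‖a‖ = Δt := by
    rw [ha, norm_mul, norm_neg, Complex.norm_I, one_mul, Complex.norm_real,
      Real.norm_eq_abs, abs_of_nonneg hΔt]
  have hnI : ‖(-Complex.I : ℂ)‖ = 1 := by rw [norm_neg, Complex.norm_I]
  -- commutator rewrites
  have comm_smul : ∀ (c d : ℂ) (P Q : Matrix n n ℂ),
      (c • P) * (d • Q) - (d • Q) * (c • P) = (c * d) • (P * Q - Q * P) := by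
    intro c d P Q
    rw [smul_mul_assoc, mul_smul_comm, smul_smul, smul_mul_assoc, mul_smul_comm,
      smul_smul, mul_comm d c, ← smul_sub]
  have c1 : ‖X * Y - Y * X‖ = Δt ^ 2 * ‖HRee * HReo - HReo * HRee‖ := by
    rw [hXdef, hYdef, comm_smul, norm_smul, norm_mul, hna, ← sq]
  have c2 : ‖Cm * Dm - Dm * Cm‖ = ‖Ke * Ko - Ko * Ke‖ := by
    rw [hCmdef, hDmdef, comm_smul, norm_smul, norm_mul, hnI, one_mul, one_mul]
  have c2' : ‖Ke * Ko - Ko * Ke‖ ≤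
      ∑ ℓ ∈ Ee, ∑ ℓ' ∈ Eo, |ξ ℓ| * |ξ ℓ'| * ‖HI ℓ * HI ℓ' - HI ℓ' * HI ℓ‖ := by
    have hexp : Ke * Ko - Ko * Ke =
        ∑ ℓ ∈ Ee, ∑ ℓ' ∈ Eo, (ξ ℓ * ξ ℓ') • (HI ℓ * HI ℓ' - HI ℓ' * HI ℓ) := by
      rw [hKe, hKo, Finset.sum_mul_sum, Finset.sum_mul_sum, Finset.sum_comm (s := Eo) (t := Ee),
        ← Finset.sum_sub_distrib]
      refine Finset.sum_congr rfl fun ℓ _ => ?_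
      rw [← Finset.sum_sub_distrib]
      refine Finset.sum_congr rfl fun ℓ' _ => ?_
      rw [smul_mul_assoc, mul_smul_comm, smul_smul, smul_mul_assoc, mul_smul_comm,
        smul_smul, mul_comm (ξ ℓ') (ξ ℓ), ← smul_sub]
    rw [hexp]
    refine (norm_sum_le _ _).trans (Finset.sum_le_sum fun ℓ _ => ?_)
    refine (norm_sum_le _ _).trans (Finset.sum_le_sum fun ℓ' _ => ?_)
    rw [norm_smul, Real.norm_eq_abs, abs_mul, mul_assoc]
  have hKu : K = ∑ ℓ ∈ Ee ∪ Eo, ξ ℓ • HI ℓ := by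
    rw [hK, hKe, hKo, ← Finset.sum_union hdisj]
  have c3 : ‖(X + Y) * (Cm + Dm) - (Cm + Dm) * (X + Y)‖ ≤
      Δt * ∑ ℓ ∈ Ee ∪ Eo, |ξ ℓ| * ‖HRe * HI ℓ - HI ℓ * HRe‖ := by
    have hXYa : X + Y = a • HRe := by rw [hHRe, smul_add]
    have hCDa : Cm + Dm = (-Complex.I) • K := by rw [hK, smul_add]
    rw [hXYa, hCDa, comm_smul, norm_smul, norm_mul, hna, hnI, mul_one]
    refine mul_le_mul_of_nonneg_left ?_ hΔt
    have hexp2 : HRe * K - K * HRe = ∑ ℓ ∈ Ee ∪ Eo, ξ ℓ • (HRe * HI ℓ - HI ℓ * HRe) := by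
      rw [hKu, Finset.mul_sum, Finset.sum_mul, ← Finset.sum_sub_distrib]
      refine Finset.sum_congr rfl fun ℓ _ => ?_
      rw [mul_smul_comm, smul_mul_assoc, ← smul_sub]
    rw [hexp2]
    refine (norm_sum_le _ _).trans (Finset.sum_le_sum fun ℓ _ => ?_)
    rw [norm_smul, Real.norm_eq_abs]
  -- final
  refine tri.trans ?_
  rw [c1, c2]
  have h2 := c2'
  have h3 := c3
  have hnonneg : (0:ℝ) ≤ ‖HRee * HReo - HReo * HRee‖ := norm_nonneg _
  linarith
end

section
/- Let H and O be Hermitian n×n complex matrices and let ρ be a positive semidefinite n×n complex matrix with Tr ρ = 1. Define X : ℝ → ℝ by X(ξ) := Re Tr(O * exp((−i·ξ)•H) * ρ * exp((i·ξ)•H)). Then X is differentiable and for every ξ ∈ ℝ, |X'(ξ)| ≤ ‖[H, O]‖ ≤ 2·‖H‖·‖O‖. -/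
open scoped Matrix.Norms.L2Operator ComplexOrder
open Matrix

private lemma abs_trace_mul_le_aux {n : Type*} [Fintype n] [DecidableEq n]
    (A S : Matrix n n ℂ) (hS : S.PosSemidef) :
    ‖(A * S).trace‖ ≤ ‖A‖ * (S.trace).re := by
  obtain ⟨B, hBH, hBB⟩ : ∃ B : Matrix n n ℂ, Bᴴ = B ∧ B * B = S :=
    open scoped MatrixOrder in
    ⟨CFC.sqrt S, (CFC.sqrt_nonneg S).posSemidef.1, CFC.sqrt_mul_sqrt_self S hS.nonneg⟩
  have hconj : ∀ i k : n, (starRingEnd ℂ) (B k i) = B i k := by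
    intro i k
    have := congrFun (congrFun hBH i) k
    simpa [Matrix.conjTranspose_apply] using this
  have key : ∀ i, ‖(B * A * B) i i‖ ≤ ‖A‖ * (S i i).re := by
    intro i
    set v : EuclideanSpace ℂ n := (EuclideanSpace.equiv n ℂ).symm (fun j => B j i) with hv
    set w : EuclideanSpace ℂ n := (EuclideanSpace.equiv n ℂ).symm (A *ᵥ fun j => B j i)
      with hw
    have hvj : ∀ j, v j = B j i := fun j => rfl
    have h1 : (B * A * B) i i = @inner ℂ _ _ v w := by
      rw [mul_assoc, Matrix.mul_apply, PiLp.inner_apply]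
      refine Finset.sum_congr rfl fun k _ => ?_
      simp only [RCLike.inner_apply, hvj, hconj]
      rw [mul_comm]
      congr 1
    have hnv : ‖v‖ ^ 2 = (S i i).re := by
      have hinner : @inner ℂ _ _ v v = S i i := by
        rw [PiLp.inner_apply, ← hBB, Matrix.mul_apply]
        refine Finset.sum_congr rfl fun k _ => ?_
        simp only [RCLike.inner_apply, hvj, hconj]
        exact mul_comm _ _
      rw [@norm_sq_eq_re_inner ℂ, hinner]; rfl
    have hnw : ‖w‖ ≤ ‖A‖ * ‖v‖ := A.l2_opNorm_mulVec v
    calc ‖(B * A * B) i i‖ = ‖@inner ℂ _ _ v w‖ := by rw [h1]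
      _ ≤ ‖v‖ * ‖w‖ := norm_inner_le_norm v w
      _ ≤ ‖v‖ * (‖A‖ * ‖v‖) := by
          exact mul_le_mul_of_nonneg_left hnw (norm_nonneg v)
      _ = ‖A‖ * ‖v‖ ^ 2 := by ring
      _ = ‖A‖ * (S i i).re := by rw [hnv]
  have htr : (A * S).trace = (B * A * B).trace := by
    rw [← hBB, ← mul_assoc, Matrix.trace_mul_cycle]
  rw [htr]
  have h2 : (S.trace).re = ∑ i, (S i i).re := by
    simp [Matrix.trace, Matrix.diag, Complex.re_sum]
  rw [h2, Finset.mul_sum]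
  calc ‖(B * A * B).trace‖ = ‖∑ i, (B * A * B) i i‖ := by rfl
    _ ≤ ∑ i, ‖(B * A * B) i i‖ := norm_sum_le _ _
    _ ≤ ∑ i, ‖A‖ * (S i i).re := Finset.sum_le_sum fun i _ => key i

/-- Single-increment derivative bound from the proof of
Lemma SM lem:single_traj_variance_bound: `X(ξ) = Re Tr(O · e^{−iξH} ρ e^{iξH})` is
differentiable with `|X'(ξ)| ≤ ‖[H,O]‖ ≤ 2‖H‖‖O‖`. -/
theorem single_increment_derivative_bound {n : Type*} [Fintype n] [DecidableEq n] [Nonempty n]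
    (H O ρ : Matrix n n ℂ) (hH : H.IsHermitian) (hO : O.IsHermitian)
    (hρ : ρ.PosSemidef) (hρtr : ρ.trace = 1)
    (X : ℝ → ℝ)
    (hX : ∀ ξ : ℝ, X ξ =
      ((O * (NormedSpace.exp (((-Complex.I) * (ξ : ℂ)) • H) * ρ *
        NormedSpace.exp ((Complex.I * (ξ : ℂ)) • H))).trace).re) :
    Differentiable ℝ X ∧
    ∀ ξ : ℝ, |deriv X ξ| ≤ ‖H * O - O * H‖ ∧ ‖H * O - O * H‖ ≤ 2 * ‖H‖ * ‖O‖ := by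
  classical
  set B : Matrix n n ℂ := (-Complex.I) • H with hB
  set C : Matrix n n ℂ := Complex.I • H with hC
  set f : ℝ → Matrix n n ℂ := fun t => NormedSpace.exp (t • B) with hf_def
  set g : ℝ → Matrix n n ℂ := fun t => NormedSpace.exp (t • C) with hg_def
  have hsm : ∀ (ξ : ℝ) (c : ℂ) (M : Matrix n n ℂ), (c * (ξ : ℂ)) • M = ξ • (c • M) := by
    intro ξ c M
    have h : c * (ξ : ℂ) = ξ • c := by rw [Complex.real_smul, mul_comm]
    rw [h, smul_assoc]
  have hXY : ∀ ξ : ℝ, X ξ = ((O * f ξ * ρ * g ξ).trace).re := by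
    intro ξ
    rw [hX ξ, hf_def, hg_def]
    simp only [hsm ξ (-Complex.I) H, hsm ξ Complex.I H, ← hB, ← hC, mul_assoc]
  -- derivatives of the exponentials
  have hf : ∀ ξ : ℝ, HasDerivAt f (B * f ξ) ξ := by
    intro ξ
    have := hasDerivAt_exp_smul_const' (𝕂 := ℝ) B ξ
    exact this
  have hg : ∀ ξ : ℝ, HasDerivAt g (g ξ * C) ξ := by
    intro ξ
    have := hasDerivAt_exp_smul_const (𝕂 := ℝ) C ξ
    exact this
  have hF : ∀ ξ : ℝ, HasDerivAt (fun t => O * f t * ρ * g t)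
      ((O * (B * f ξ)) * ρ * g ξ + (O * f ξ * ρ) * (g ξ * C)) ξ := by
    intro ξ
    exact (((hf ξ).const_mul O).mul_const ρ).mul (hg ξ)
  -- derivative of X
  have hXd : ∀ ξ : ℝ, HasDerivAt X
      ((((O * (B * f ξ)) * ρ * g ξ + (O * f ξ * ρ) * (g ξ * C)).trace).re) ξ := by
    intro ξ
    have hXfun : X = fun t => ((O * f t * ρ * g t).trace).re := funext hXY
    rw [hXfun]
    have h1 := (((LinearMap.toContinuousLinearMap
        (Matrix.traceLinearMap n ℂ ℂ)).restrictScalars ℝ).hasFDerivAt).comp_hasDerivAt ξ (hF ξ)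
    have h2 := (Complex.reCLM.hasFDerivAt).comp_hasDerivAt ξ h1
    simpa [Function.comp_def] using h2
  -- identify the derivative
  have hgf : ∀ ξ : ℝ, g ξ = (f ξ)ᴴ := by
    intro ξ
    rw [hf_def, hg_def]
    rw [← Matrix.exp_conjTranspose]
    congr 1
    rw [Matrix.conjTranspose_smul, hB, hC, Matrix.conjTranspose_smul, hH.eq]
    simp
  have hSpsd : ∀ ξ : ℝ, (f ξ * ρ * g ξ).PosSemidef := by
    intro ξ
    rw [hgf ξ]
    exact hρ.mul_mul_conjTranspose_same (f ξ)
  have hgf1 : ∀ ξ : ℝ, g ξ * f ξ = 1 := by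
    intro ξ
    rw [hf_def, hg_def]
    rw [← Matrix.exp_add_of_commute]
    · have : ξ • C + ξ • B = 0 := by
        rw [← smul_add, hB, hC, ← add_smul]
        simp
      rw [this, NormedSpace.exp_zero]
    · exact (((Commute.refl H).smul_left Complex.I).smul_right (-Complex.I)).smul_left ξ
        |>.smul_right ξ
  have hStr : ∀ ξ : ℝ, (f ξ * ρ * g ξ).trace = 1 := by
    intro ξ
    rw [Matrix.trace_mul_cycle, mul_assoc, ← mul_assoc (g ξ), hgf1 ξ, one_mul, hρtr]
  have hDtr : ∀ ξ : ℝ,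
      ((O * (B * f ξ)) * ρ * g ξ + (O * f ξ * ρ) * (g ξ * C)).trace
        = Complex.I * ((H * O - O * H) * (f ξ * ρ * g ξ)).trace := by
    intro ξ
    have e1 : (O * (B * f ξ)) * ρ * g ξ = (O * B) * (f ξ * ρ * g ξ) := by
      simp only [mul_assoc]
    have e2 : (O * f ξ * ρ) * (g ξ * C) = (O * (f ξ * ρ * g ξ)) * C := by
      simp only [mul_assoc]
    rw [e1, e2, Matrix.trace_add, Matrix.trace_mul_comm (O * (f ξ * ρ * g ξ)) C,
      ← mul_assoc C O, ← Matrix.trace_add, ← add_mul]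
    have e3 : O * B + C * O = Complex.I • (H * O - O * H) := by
      rw [hB, hC, mul_smul_comm, smul_mul_assoc, smul_sub, neg_smul]
      abel
    rw [e3, smul_mul_assoc, Matrix.trace_smul, smul_eq_mul]
  have hbound2 : ‖H * O - O * H‖ ≤ 2 * ‖H‖ * ‖O‖ := by
    calc ‖H * O - O * H‖ ≤ ‖H * O‖ + ‖O * H‖ := norm_sub_le _ _
      _ ≤ ‖H‖ * ‖O‖ + ‖O‖ * ‖H‖ := add_le_add (norm_mul_le _ _) (norm_mul_le _ _)
      _ = 2 * ‖H‖ * ‖O‖ := by ring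
  refine ⟨fun ξ => (hXd ξ).differentiableAt, fun ξ => ⟨?_, hbound2⟩⟩
  rw [(hXd ξ).deriv, hDtr ξ]
  have habs : |(Complex.I * ((H * O - O * H) * (f ξ * ρ * g ξ)).trace).re|
      ≤ ‖((H * O - O * H) * (f ξ * ρ * g ξ)).trace‖ := by
    calc |(Complex.I * ((H * O - O * H) * (f ξ * ρ * g ξ)).trace).re|
        ≤ ‖Complex.I * ((H * O - O * H) * (f ξ * ρ * g ξ)).trace‖ := Complex.abs_re_le_norm _
      _ = ‖((H * O - O * H) * (f ξ * ρ * g ξ)).trace‖ := by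
          rw [norm_mul, Complex.norm_I, one_mul]
  refine habs.trans ?_
  have := abs_trace_mul_le_aux (H * O - O * H) (f ξ * ρ * g ξ) (hSpsd ξ)
  rwa [hStr ξ, Complex.one_re, mul_one] at this
end

section
/- Let H be a Hermitian n×n complex matrix, let a > 0, and let ad_H denote the linear endomorphism of the space of n×n complex matrices given by ad_H(ρ) := H*ρ − ρ*H. Then for every n×n complex matrix ρ, ∫ exp((−i·ξ)•H) * ρ * exp((i·ξ)•H) d(gaussianReal 0 (2a))(ξ) = exp(−a • ad_H²)(ρ), where exp(−a • ad_H²) is the exponential of the endomorphism −a·(ad_H ∘ ad_H). -/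
open scoped Matrix.Norms.L2Operator NNReal
open Matrix MeasureTheory ProbabilityTheory

/-- The operator-norm topology on continuous linear endomorphisms of the matrix space
makes it a topological ring (the two topologies agree definitionally). -/
noncomputable instance matrixCLMTopologicalRing {n : Type*} [Fintype n] [DecidableEq n] :
    IsTopologicalRing (Matrix n n ℂ →L[ℂ] Matrix n n ℂ) := by
  have h := @NonUnitalSeminormedRing.toIsTopologicalRing (Matrix n n ℂ →L[ℂ] Matrix n n ℂ)
    inferInstance
  exact h

set_option maxHeartbeats 4000000
set_option synthInstance.maxHeartbeats 1000000

section Aux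
variable {n : Type*} [Fintype n] [DecidableEq n]

/-- Entrywise (Hadamard) multiplication by `w` as a continuous linear endomorphism. -/
noncomputable def hadamardCLM (w : (n × n) → ℂ) : Matrix n n ℂ →L[ℂ] Matrix n n ℂ :=
  LinearMap.toContinuousLinearMap
    { toFun := fun ρ => Matrix.of fun j k => w (j, k) * ρ j k
      map_add' := fun ρ σ => by ext j k; simp [mul_add]
      map_smul' := fun c ρ => by
        ext j k
        simp only [Matrix.of_apply, Matrix.smul_apply, smul_eq_mul, RingHom.id_apply]
        ring }

@[simp] lemma hadamardCLM_apply (w : (n × n) → ℂ) (ρ : Matrix n n ℂ) (j k : n) :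
    hadamardCLM w ρ j k = w (j, k) * ρ j k := rfl

/-- `ρ ↦ A * ρ * B` as a continuous linear endomorphism. -/
noncomputable def sandwichCLM (A B : Matrix n n ℂ) : Matrix n n ℂ →L[ℂ] Matrix n n ℂ :=
  LinearMap.toContinuousLinearMap ((LinearMap.mulLeft ℂ A).comp (LinearMap.mulRight ℂ B))

@[simp] lemma sandwichCLM_apply (A B ρ : Matrix n n ℂ) :
    sandwichCLM A B ρ = A * ρ * B := (mul_assoc A ρ B).symm

variable {U : Matrix n n ℂ}

lemma sandwich_cancel₁ (hVU : star U * U = 1) (ρ : Matrix n n ℂ) :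
    sandwichCLM (star U) U (sandwichCLM U (star U) ρ) = ρ := by
  simp only [sandwichCLM_apply, ← mul_assoc]
  rw [hVU, one_mul, mul_assoc, hVU, mul_one]

lemma sandwich_cancel₂ (hUV : U * star U = 1) (ρ : Matrix n n ℂ) :
    sandwichCLM U (star U) (sandwichCLM (star U) U ρ) = ρ := by
  simp only [sandwichCLM_apply, ← mul_assoc]
  rw [hUV, one_mul, mul_assoc, hUV, mul_one]

lemma hadamard_hadamard (w w' : (n × n) → ℂ) (σ : Matrix n n ℂ) :
    hadamardCLM w (hadamardCLM w' σ) = hadamardCLM (w * w') σ := by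
  ext j k
  simp only [hadamardCLM_apply, Pi.mul_apply]
  ring

/-- The unital algebra homomorphism `w ↦ conj_U ∘ hadamard(w) ∘ conj_{U*}`. -/
noncomputable def psiHom (U : Matrix n n ℂ) (hUV : U * star U = 1) (hVU : star U * U = 1) :
    ((n × n) → ℂ) →ₐ[ℂ] (Matrix n n ℂ →L[ℂ] Matrix n n ℂ) where
  toFun w := (sandwichCLM U (star U)).comp ((hadamardCLM w).comp (sandwichCLM (star U) U))
  map_one' := by
    refine ContinuousLinearMap.ext fun ρ => ?_
    simp only [ContinuousLinearMap.comp_apply, ContinuousLinearMap.one_apply]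
    have h1 : hadamardCLM (1 : (n × n) → ℂ) (sandwichCLM (star U) U ρ)
        = sandwichCLM (star U) U ρ := by
      ext j k; simp
    rw [h1, sandwich_cancel₂ hUV]
  map_mul' w w' := by
    refine ContinuousLinearMap.ext fun ρ => ?_
    simp only [ContinuousLinearMap.comp_apply, ContinuousLinearMap.mul_apply]
    rw [sandwich_cancel₁ hVU, hadamard_hadamard]
  map_zero' := by
    refine ContinuousLinearMap.ext fun ρ => ?_
    simp only [ContinuousLinearMap.comp_apply, ContinuousLinearMap.zero_apply]
    have h1 : hadamardCLM (0 : (n × n) → ℂ) (sandwichCLM (star U) U ρ) = 0 := by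
      ext j k; simp
    rw [h1, map_zero]
  map_add' w w' := by
    refine ContinuousLinearMap.ext fun ρ => ?_
    simp only [ContinuousLinearMap.comp_apply, ContinuousLinearMap.add_apply]
    have h1 : hadamardCLM (w + w') (sandwichCLM (star U) U ρ)
        = hadamardCLM w (sandwichCLM (star U) U ρ)
          + hadamardCLM w' (sandwichCLM (star U) U ρ) := by
      ext j k; simp [add_mul]
    rw [h1, map_add]
  commutes' c := by
    refine ContinuousLinearMap.ext fun ρ => ?_
    simp only [ContinuousLinearMap.comp_apply]
    have h1 : hadamardCLM ((algebraMap ℂ ((n × n) → ℂ)) c) (sandwichCLM (star U) U ρ)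
        = c • (sandwichCLM (star U) U ρ) := by
      ext j k
      simp [Pi.algebraMap_apply, Matrix.smul_apply, smul_eq_mul]
    rw [h1, _root_.map_smul, sandwich_cancel₂ hUV]
    simp [Algebra.algebraMap_eq_smul_one, ContinuousLinearMap.smul_apply,
      ContinuousLinearMap.one_apply]

@[simp] lemma psiHom_apply (hUV : U * star U = 1) (hVU : star U * U = 1)
    (w : (n × n) → ℂ) (ρ : Matrix n n ℂ) :
    psiHom U hUV hVU w ρ = U * (hadamardCLM w (star U * ρ * U)) * star U := by
  show sandwichCLM U (star U) (hadamardCLM w (sandwichCLM (star U) U ρ)) = _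
  rw [sandwichCLM_apply, sandwichCLM_apply]

lemma psiHom_continuous (hUV : U * star U = 1) (hVU : star U * U = 1) :
    Continuous (psiHom U hUV hVU) := by
  let L : ((n × n) → ℂ) →ₗ[ℂ] (Matrix n n ℂ →L[ℂ] Matrix n n ℂ) :=
    { toFun := psiHom U hUV hVU
      map_add' := fun w w' => map_add _ w w'
      map_smul' := fun c w => by
        simp only [RingHom.id_apply]
        rw [Algebra.smul_def, _root_.map_mul, AlgHom.commutes, ← Algebra.smul_def] }
  exact L.continuous_of_finiteDimensional

lemma psiHom_exp (hUV : U * star U = 1) (hVU : star U * U = 1) (w : (n × n) → ℂ) :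
    NormedSpace.exp (psiHom U hUV hVU w)
      = psiHom U hUV hVU (fun p => Complex.exp (w p)) := by
  have h2 : NormedSpace.exp w = (fun p => Complex.exp (w p)) := by
    funext p
    rw [Pi.coe_exp, ← Complex.exp_eq_exp_ℂ]
  have h := NormedSpace.map_exp (psiHom U hUV hVU).toRingHom (psiHom_continuous hUV hVU) w
  rw [h2] at h
  exact h.symm

lemma sum_smul_std (c : (n × n) → ℂ) (σ : Matrix n n ℂ) :
    ∑ p : n × n, c p • (σ p.1 p.2 • Matrix.single p.1 p.2 (1 : ℂ))
      = Matrix.of fun j k => c (j, k) * σ j k := by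
  ext j k
  rw [Matrix.sum_apply]
  simp only [Matrix.smul_apply, Matrix.single, Matrix.of_apply, smul_eq_mul, mul_ite,
    mul_one, mul_zero]
  rw [Finset.sum_eq_single (j, k)]
  · simp
  · intro p _ hp
    rw [if_neg]
    intro hcon
    exact hp (Prod.ext hcon.1 hcon.2)
  · intro h
    exact absurd (Finset.mem_univ _) h

lemma psiHom_smul (hUV : U * star U = 1) (hVU : star U * U = 1) (c : ℂ) (w : (n × n) → ℂ) :
    psiHom U hUV hVU (c • w) = c • psiHom U hUV hVU w := by
  rw [Algebra.smul_def, _root_.map_mul, AlgHom.commutes, ← Algebra.smul_def]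

end Aux

open Real in
lemma gaussian_exp_integral {v : ℝ≥0} (hv : v ≠ 0) (t : ℝ) :
    ∫ ξ : ℝ, Complex.exp (((t * ξ : ℝ) : ℂ) * Complex.I) ∂(gaussianReal 0 v)
      = Complex.exp (-((v : ℝ) : ℂ) * (t : ℂ) ^ 2 / 2) := by
  have hvpos : (0 : ℝ) < (v : ℝ) := by
    have := pos_iff_ne_zero.mpr hv
    exact_mod_cast this
  set b : ℂ := (((2 * (v : ℝ))⁻¹ : ℝ) : ℂ) with hbdef
  have hb : 0 < b.re := by
    rw [hbdef, Complex.ofReal_re]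
    positivity
  have key := fourierIntegral_gaussian hb (t : ℂ)
  rw [gaussianReal_of_var_ne_zero 0 hv]
  have hpdf : gaussianPDF 0 v
      = fun x => ((Real.toNNReal (gaussianPDFReal 0 v x) : ℝ≥0) : ENNReal) := rfl
  rw [hpdf]
  rw [integral_withDensity_eq_integral_smul
    (measurable_gaussianPDFReal 0 v).real_toNNReal _]
  have hpt : ∀ ξ : ℝ, (Real.toNNReal (gaussianPDFReal 0 v ξ))
        • Complex.exp (((t * ξ : ℝ) : ℂ) * Complex.I)
      = ((Real.sqrt (2 * π * v) : ℝ) : ℂ)⁻¹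
        * (Complex.exp (Complex.I * (t : ℂ) * (ξ : ℂ)) * Complex.exp (-b * (ξ : ℂ) ^ 2)) := by
    intro ξ
    rw [NNReal.smul_def, Real.coe_toNNReal _ (gaussianPDFReal_nonneg _ _ _)]
    rw [Complex.real_smul, gaussianPDFReal]
    push_cast
    rw [mul_assoc]
    congr 1
    rw [← Complex.exp_add, ← Complex.exp_add]
    congr 1
    rw [hbdef]
    push_cast
    have h2v : (2 * (v : ℂ)) ≠ 0 := by
      have : ((v:ℝ):ℂ) ≠ 0 := by exact_mod_cast hvpos.ne'
      simp [this]
    field_simp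
    ring
  simp_rw [hpt]
  rw [integral_const_mul, key]
  have h2 : ((π : ℂ) / b) = ((2 * π * (v : ℝ) : ℝ) : ℂ) := by
    rw [hbdef]
    push_cast
    rw [div_eq_mul_inv, inv_inv]
    ring
  have h3 : ((π : ℂ) / b) ^ (1 / 2 : ℂ) = ((Real.sqrt (2 * π * v) : ℝ) : ℂ) := by
    rw [h2, show ((1 : ℂ)/2) = (((1 : ℝ)/2 : ℝ) : ℂ) by norm_num,
      ← Complex.ofReal_cpow (by positivity)]
    norm_cast
    rw [Real.sqrt_eq_rpow]
  have h4 : -(t : ℂ) ^ 2 / (4 * b) = -((v : ℝ) : ℂ) * (t : ℂ) ^ 2 / 2 := by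
    rw [hbdef]
    push_cast
    have hv0 : ((v : ℝ) : ℂ) ≠ 0 := by exact_mod_cast hvpos.ne'
    field_simp
    ring
  rw [h3, h4, ← mul_assoc, inv_mul_cancel₀, one_mul]
  exact_mod_cast (Real.sqrt_ne_zero'.mpr (by positivity))


/-- Closed form of the single-channel Gaussian-averaging map
(Eq. SM app-Phi-ell-closed): averaging the conjugation `ρ ↦ e^{−iξH} ρ e^{iξH}` over
`ξ ∼ N(0, 2a)` equals the exponential of the endomorphism `−a·ad_H²`, where
`ad_H(ρ) = Hρ − ρH`. -/
theorem gaussian_averaging_closed_form {n : Type*} [Fintype n] [DecidableEq n] [Nonempty n]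
    (H : Matrix n n ℂ) (hH : H.IsHermitian) (a : ℝ) (ha : 0 < a)
    (adH : Matrix n n ℂ →L[ℂ] Matrix n n ℂ)
    (hadH : adH = LinearMap.toContinuousLinearMap
      (LinearMap.mulLeft ℂ H - LinearMap.mulRight ℂ H))
    (ρ : Matrix n n ℂ) :
    (∫ ξ : ℝ, NormedSpace.exp (((-Complex.I) * (ξ : ℂ)) • H) * ρ *
        NormedSpace.exp ((Complex.I * (ξ : ℂ)) • H)
      ∂(gaussianReal 0 (2 * a).toNNReal)) =
      NormedSpace.exp ((-(a : ℂ)) • (adH ∘L adH)) ρ := by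
  classical
  set v : ℝ≥0 := (2 * a).toNNReal with hvdef
  have hv2 : ((v : ℝ)) = 2 * a := Real.coe_toNNReal _ (by positivity)
  have hv0 : v ≠ 0 := by
    intro hcon
    rw [hcon] at hv2
    simp at hv2
    nlinarith
  set U : Matrix n n ℂ := (hH.eigenvectorUnitary : Matrix n n ℂ) with hUdef
  have hUV : U * star U = 1 := Matrix.mem_unitaryGroup_iff.mp hH.eigenvectorUnitary.2
  have hVU : star U * U = 1 := Matrix.mem_unitaryGroup_iff'.mp hH.eigenvectorUnitary.2
  set lam : n → ℝ := hH.eigenvalues with hlamdef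
  set D : Matrix n n ℂ := Matrix.diagonal (fun i => (lam i : ℂ)) with hDdef
  have hspec : H = U * D * star U := by
    have h := hH.spectral_theorem
    have hD : Matrix.diagonal (RCLike.ofReal ∘ hH.eigenvalues) = D := by
      rw [hDdef]
      congr 1
    rw [← hD]
    exact h
  -- the exponential of `c • H`
  set u : (Matrix n n ℂ)ˣ := ⟨U, star U, hUV, hVU⟩ with hudef
  have hexp : ∀ c : ℂ, NormedSpace.exp (c • H)
      = U * Matrix.diagonal (fun i => Complex.exp (c * lam i)) * star U := by
    intro c
    have h1 : c • H = (u : Matrix n n ℂ) * (c • D) * ((u⁻¹ : (Matrix n n ℂ)ˣ) : Matrix n n ℂ) := by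
      show c • H = U * (c • D) * star U
      rw [hspec, mul_smul_comm, smul_mul_assoc]
    have h3 : c • D = Matrix.diagonal (fun i => c * (lam i : ℂ)) := by
      rw [hDdef, ← Matrix.diagonal_smul]
      congr 1
    have h4 : (NormedSpace.exp fun i => c * (lam i : ℂ))
        = fun i => Complex.exp (c * (lam i : ℂ)) := by
      funext i
      rw [Pi.coe_exp, ← Complex.exp_eq_exp_ℂ]
    have h2 : NormedSpace.exp (c • D)
        = Matrix.diagonal (fun i => Complex.exp (c * lam i)) := by
      rw [h3]
      refine (Matrix.exp_diagonal _).trans ?_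
      rw [h4]
    rw [h1]
    refine (Matrix.exp_units_conj u (c • D)).trans ?_
    rw [h2]
    rfl
  set ρ' : Matrix n n ℂ := star U * ρ * U with hρ'def
  set g : n × n → ℝ → ℂ :=
    fun p ξ => Complex.exp ((((lam p.2 - lam p.1) * ξ : ℝ) : ℂ) * Complex.I) with hgdef
  set C : n × n → Matrix n n ℂ :=
    fun p => ρ' p.1 p.2 • Matrix.single p.1 p.2 (1 : ℂ) with hCdef
  have hg_int : ∀ p : n × n, Integrable (g p) (gaussianReal 0 v) := by
    intro p
    have hc : Continuous (g p) := by
      rw [hgdef]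
      fun_prop
    refine (integrable_const (μ := gaussianReal 0 v) (1 : ℝ)).mono'
      hc.aestronglyMeasurable ?_
    filter_upwards with ξ
    simp only [hgdef, norm_one]
    rw [Complex.norm_exp_ofReal_mul_I]
  have hInt : ∀ p : n × n, Integrable (fun ξ => g p ξ • C p) (gaussianReal 0 v) :=
    fun p => (hg_int p).smul_const _
  -- pointwise identity for the integrand
  have hint : ∀ ξ : ℝ,
      NormedSpace.exp (((-Complex.I) * (ξ : ℂ)) • H) * ρ *
        NormedSpace.exp ((Complex.I * (ξ : ℂ)) • H)
      = sandwichCLM U (star U) (∑ p : n × n, g p ξ • C p) := by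
    intro ξ
    have hmid : (Matrix.diagonal fun i => Complex.exp ((-Complex.I * (ξ : ℂ)) * lam i)) * ρ' *
        (Matrix.diagonal fun i => Complex.exp ((Complex.I * (ξ : ℂ)) * lam i))
        = ∑ p : n × n, g p ξ • C p := by
      simp only [hCdef, hgdef]
      rw [sum_smul_std (fun p => Complex.exp ((((lam p.2 - lam p.1) * ξ : ℝ) : ℂ) * Complex.I)) ρ']
      ext j k
      rw [Matrix.mul_diagonal, Matrix.diagonal_mul, Matrix.of_apply]
      rw [mul_right_comm, ← Complex.exp_add]
      congr 2
      push_cast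
      ring
    rw [hexp, hexp, sandwichCLM_apply, ← hmid, hρ'def]
    simp only [mul_assoc]
  simp only [hint]
  have hM : Integrable (fun ξ => ∑ p : n × n, g p ξ • C p) (gaussianReal 0 v) :=
    integrable_finset_sum _ (fun p _ => hInt p)
  rw [ContinuousLinearMap.integral_comp_comm _ hM]
  have hMint : (∫ ξ, ∑ p : n × n, g p ξ • C p ∂(gaussianReal 0 v))
      = Matrix.of fun j k =>
          Complex.exp (-((v : ℝ) : ℂ) * ((lam k - lam j : ℝ) : ℂ) ^ 2 / 2) * ρ' j k := by
    rw [integral_finset_sum _ (fun p _ => hInt p)]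
    have hone : ∀ p : n × n, (∫ ξ, g p ξ • C p ∂(gaussianReal 0 v))
        = Complex.exp (-((v : ℝ) : ℂ) * ((lam p.2 - lam p.1 : ℝ) : ℂ) ^ 2 / 2) • C p := by
      intro p
      rw [integral_smul_const]
      simp only [hgdef]
      rw [gaussian_exp_integral hv0 (lam p.2 - lam p.1)]
    calc (∑ p : n × n, ∫ ξ, g p ξ • C p ∂(gaussianReal 0 v))
        = ∑ p : n × n,
            Complex.exp (-((v : ℝ) : ℂ) * ((lam p.2 - lam p.1 : ℝ) : ℂ) ^ 2 / 2) • C p :=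
          Finset.sum_congr rfl (fun p _ => hone p)
      _ = _ := by
          simp only [hCdef]
          rw [sum_smul_std
            (fun p => Complex.exp (-((v : ℝ) : ℂ) * ((lam p.2 - lam p.1 : ℝ) : ℂ) ^ 2 / 2)) ρ']
  rw [hMint]
  -- now the right-hand side
  have had : adH = psiHom U hUV hVU (fun p => (((lam p.1 : ℝ) : ℂ) - ((lam p.2 : ℝ) : ℂ))) := by
    rw [hadH]
    refine ContinuousLinearMap.ext fun σ => ?_
    have hlhs : (LinearMap.toContinuousLinearMap
        (LinearMap.mulLeft ℂ H - LinearMap.mulRight ℂ H)) σ = H * σ - σ * H := rfl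
    rw [hlhs, psiHom_apply]
    have h₁ : hadamardCLM (fun p => (((lam p.1 : ℝ) : ℂ) - ((lam p.2 : ℝ) : ℂ)))
        (star U * σ * U) = D * (star U * σ * U) - (star U * σ * U) * D := by
      ext j k
      simp only [hDdef, hadamardCLM_apply, Matrix.sub_apply, Matrix.diagonal_mul,
        Matrix.mul_diagonal]
      ring
    rw [h₁, mul_sub, sub_mul]
    congr 1
    · rw [hspec]
      simp only [mul_assoc, hUV, mul_one]
    · rw [hspec]
      simp only [← mul_assoc, hUV, one_mul]
  have hcomp : adH ∘L adH
      = psiHom U hUV hVU ((fun p => (((lam p.1 : ℝ) : ℂ) - ((lam p.2 : ℝ) : ℂ)))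
          * (fun p => (((lam p.1 : ℝ) : ℂ) - ((lam p.2 : ℝ) : ℂ)))) := by
    rw [had, _root_.map_mul]
    rfl
  have hw : (-(a : ℂ)) • (adH ∘L adH)
      = psiHom U hUV hVU (fun p => -(a : ℂ) * (((lam p.1 : ℝ) : ℂ) - ((lam p.2 : ℝ) : ℂ)) ^ 2) := by
    rw [hcomp, ← psiHom_smul]
    congr 1
    funext p
    simp only [Pi.smul_apply, Pi.mul_apply, smul_eq_mul]
    ring
  rw [hw, psiHom_exp, psiHom_apply]
  rw [show sandwichCLM U (star U) (Matrix.of fun j k =>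
      Complex.exp (-((v : ℝ) : ℂ) * ((lam k - lam j : ℝ) : ℂ) ^ 2 / 2) * ρ' j k)
    = U * (Matrix.of fun j k =>
      Complex.exp (-((v : ℝ) : ℂ) * ((lam k - lam j : ℝ) : ℂ) ^ 2 / 2) * ρ' j k) * star U
    from sandwichCLM_apply _ _ _]
  rw [← hρ'def]
  congr 1
  congr 1
  ext j k
  simp only [Matrix.of_apply, hadamardCLM_apply]
  congr 1
  rw [hv2]
  push_cast
  ring
end

section
/- Let H and K be Hermitian n×n complex matrices and let s ∈ ℝ. Then ‖exp((−i·s)•H) * K * exp((i·s)•H) − K‖ ≤ |s|·‖[H, K]‖. -/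
open scoped Matrix.Norms.L2Operator
open Matrix

/-- Bound on the conjugated-operator difference (from the integral representation
Eq. SM conj_minus_HIk): `‖e^{−isH} K e^{isH} − K‖ ≤ |s|·‖[H,K]‖`. -/
theorem conjugated_difference_bound {n : Type*} [Fintype n] [DecidableEq n] [Nonempty n]
    (H K : Matrix n n ℂ) (hH : H.IsHermitian) (hK : K.IsHermitian) (s : ℝ) :
    ‖NormedSpace.exp (((-Complex.I) * (s : ℂ)) • H) * K *
        NormedSpace.exp ((Complex.I * (s : ℂ)) • H) - K‖ ≤
      |s| * ‖H * K - K * H‖ := by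
  set A : Matrix n n ℂ := (-Complex.I) • H with hA
  set B : Matrix n n ℂ := Complex.I • H with hB
  -- the curve
  set f : ℝ → Matrix n n ℂ := fun t =>
    NormedSpace.exp ((t : ℂ) • A) * K * NormedSpace.exp ((t : ℂ) • B) with hf
  have hAsmul : ∀ t : ℝ, (t : ℂ) • A = ((-Complex.I) * (t : ℂ)) • H := by
    intro t; rw [hA, smul_smul, mul_comm]
  have hBsmul : ∀ t : ℝ, (t : ℂ) • B = (Complex.I * (t : ℂ)) • H := by
    intro t; rw [hB, smul_smul, mul_comm]
  -- unitarity of the exponentials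
  have hskew : ∀ t : ℝ, ∀ c : ℂ, (starRingEnd ℂ) c = -c →
      (((c * (t : ℂ)) • H) ∈ skewAdjoint (Matrix n n ℂ)) := by
    intro t c hc
    rw [skewAdjoint.mem_iff, star_smul, Matrix.star_eq_conjTranspose, hH, ← neg_smul]
    congr 1
    simp only [star_mul', Complex.star_def, hc, Complex.conj_ofReal]
    ring
  have hunitA : ∀ t : ℝ, NormedSpace.exp ((t : ℂ) • A) ∈ unitary (Matrix n n ℂ) := by
    intro t
    rw [hAsmul]
    let +nondep : NormedAlgebra ℚ (Matrix n n ℂ) := .restrictScalars ℚ ℂ _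
    exact NormedSpace.exp_mem_unitary_of_mem_skewAdjoint
      (hskew t (-Complex.I) (by simp [Complex.conj_I]))
  have hunitB : ∀ t : ℝ, NormedSpace.exp ((t : ℂ) • B) ∈ unitary (Matrix n n ℂ) := by
    intro t
    rw [hBsmul]
    let +nondep : NormedAlgebra ℚ (Matrix n n ℂ) := .restrictScalars ℚ ℂ _
    exact NormedSpace.exp_mem_unitary_of_mem_skewAdjoint
      (hskew t Complex.I (by simp [Complex.conj_I]))
  have hnormA : ∀ t : ℝ, ‖NormedSpace.exp ((t : ℂ) • A)‖ = 1 := fun t =>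
    CStarRing.norm_coe_unitary ⟨_, hunitA t⟩
  have hnormB : ∀ t : ℝ, ‖NormedSpace.exp ((t : ℂ) • B)‖ = 1 := fun t =>
    CStarRing.norm_coe_unitary ⟨_, hunitB t⟩
  -- the derivative
  set f' : ℝ → Matrix n n ℂ := fun t =>
    NormedSpace.exp ((t : ℂ) • A) * ((-Complex.I) • (H * K - K * H)) *
      NormedSpace.exp ((t : ℂ) • B) with hf'
  have hderiv : ∀ t : ℝ, HasDerivAt f (f' t) t := by
    intro t
    have hdA : HasDerivAt (fun u : ℝ => NormedSpace.exp ((u : ℂ) • A))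
        (NormedSpace.exp ((t : ℂ) • A) * A) t := by
      simpa [Function.comp_def] using HasDerivAt.scomp (𝕜 := ℝ) t
        (hasDerivAt_exp_smul_const (𝕂 := ℂ) A (t : ℂ)) Complex.ofRealCLM.hasDerivAt
    have hdB : HasDerivAt (fun u : ℝ => NormedSpace.exp ((u : ℂ) • B))
        (NormedSpace.exp ((t : ℂ) • B) * B) t := by
      simpa [Function.comp_def] using HasDerivAt.scomp (𝕜 := ℝ) t
        (hasDerivAt_exp_smul_const (𝕂 := ℂ) B (t : ℂ)) Complex.ofRealCLM.hasDerivAt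
    have h1 : HasDerivAt (fun u : ℝ => NormedSpace.exp ((u : ℂ) • A) * K)
        (NormedSpace.exp ((t : ℂ) • A) * A * K) t := hdA.mul_const K
    have h2 := h1.mul hdB
    convert h2 using 1
    · rfl
    · rfl
    · rfl
    · rfl
    have hcommB : B * NormedSpace.exp ((t : ℂ) • B) =
        NormedSpace.exp ((t : ℂ) • B) * B :=
      (((Commute.refl B).smul_right ((t : ℂ))).exp_right).eq
    show NormedSpace.exp ((t : ℂ) • A) * ((-Complex.I) • (H * K - K * H)) *
      NormedSpace.exp ((t : ℂ) • B) = _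
    have : (-Complex.I) • (H * K - K * H) = A * K + K * B := by
      rw [hA, hB, smul_sub, smul_mul_assoc, mul_smul_comm, sub_eq_add_neg, ← neg_smul, neg_neg]
    rw [this, ← hcommB]
    noncomm_ring
  -- bound on the derivative
  have hbound : ∀ t : ℝ, ‖f' t‖ ≤ ‖H * K - K * H‖ := by
    intro t
    calc ‖f' t‖ ≤ ‖NormedSpace.exp ((t : ℂ) • A) * ((-Complex.I) • (H * K - K * H))‖ *
        ‖NormedSpace.exp ((t : ℂ) • B)‖ := norm_mul_le _ _
    _ ≤ ‖NormedSpace.exp ((t : ℂ) • A)‖ * ‖(-Complex.I) • (H * K - K * H)‖ *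
        ‖NormedSpace.exp ((t : ℂ) • B)‖ := by
        gcongr; exact norm_mul_le _ _
    _ = ‖H * K - K * H‖ := by
        rw [hnormA, hnormB, norm_smul]
        simp
  -- mean value inequality
  have key := Convex.norm_image_sub_le_of_norm_hasDerivWithin_le
    (f := f) (f' := f') (C := ‖H * K - K * H‖) (s := Set.univ)
    (fun x _ => (hderiv x).hasDerivWithinAt)
    (fun x _ => hbound x) convex_univ (Set.mem_univ 0) (Set.mem_univ s)
  have hf0 : f 0 = K := by
    simp [hf]
  have hfs : f s = NormedSpace.exp (((-Complex.I) * (s : ℂ)) • H) * K *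
      NormedSpace.exp ((Complex.I * (s : ℂ)) • H) := by
    simp only [hf]; rw [hAsmul, hBsmul]
  rw [hf0, hfs, sub_zero, Real.norm_eq_abs] at key
  linarith [key, mul_comm ‖H * K - K * H‖ |s|]
end
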